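/- arXiv:1310.2575 — 10 statements merged into one kernel-verified Lean document; each statement's English description precedes it below -/
import Mathlib

section
/- Let X ∈ ℝ^{n×n} be such that no eigenvalue of X (as a complex matrix) lies in (−∞, 0], and let A ∈ ℝ^{n×n} satisfy exp(A) = X with every eigenvalue z of A satisfying −π < Im(z) < π (i.e., A is the principal logarithm of X). Then for every B ∈ ℝ^{n×n} with B X = X B, one has B A = A B. -/
set_option maxHeartbeats 1600000
set_option synthInstance.maxHeartbeats 400000

open NormedSpace Finset Module

section PrincipalLogCommutesAuxSection

attribute [local instance] Matrix.linftyOpSemiNormedRing Matrix.linftyOpNormedRing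
  Matrix.linftyOpNormedAlgebra

namespace PrincipalLogCommutesAux

variable {n : ℕ}

local notation "Mat" => Matrix (Fin n) (Fin n) ℂ

lemma exp_swap (P Q B : Mat) (h : P * B = B * Q) :
    exp P * B = B * exp Q := by
  have hpow : ∀ m : ℕ, P ^ m * B = B * Q ^ m := by
    intro m
    induction m with
    | zero => simp
    | succ m ih =>
        rw [pow_succ', pow_succ', mul_assoc, ih, ← mul_assoc, h, mul_assoc]
  simp only [exp_eq_tsum ℂ]
  erw [
    ← Summable.tsum_mul_right B (NormedSpace.expSeries_summable' (𝕂 := ℂ) P),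
    ← Summable.tsum_mul_left B (NormedSpace.expSeries_summable' (𝕂 := ℂ) Q)]
  refine tsum_congr fun m => ?_
  rw [smul_mul_assoc, hpow, mul_smul_comm]




lemma exists_spec_pair (A B₀ : Mat) (hB : B₀ ≠ 0) (c : ℂ)
    (h : A * B₀ = B₀ * A + c • B₀) :
    ∃ μ, μ ∈ spectrum ℂ A ∧ μ + c ∈ spectrum ℂ A := by
  classical
  set f : Module.End ℂ (Fin n → ℂ) := Matrix.toLinAlgEquiv' A with hf
  set g : Module.End ℂ (Fin n → ℂ) := Matrix.toLinAlgEquiv' B₀ with hg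
  have hgne : g ≠ 0 := by
    intro hzero
    apply hB
    have h2 : Matrix.toLinAlgEquiv' B₀ = Matrix.toLinAlgEquiv' (0 : Mat) := by
      rw [map_zero]; exact hzero
    exact Matrix.toLinAlgEquiv'.injective h2
  have hEnd : f * g = g * f + c • g := by
    have := congrArg (Matrix.toLinAlgEquiv' (R := ℂ) (n := Fin n)) h
    simpa [map_mul, map_add, map_smul] using this
  -- find w in some max gen eigenspace with g w ≠ 0
  have hexists : ∃ (μ : ℂ) (w : Fin n → ℂ), w ∈ f.maxGenEigenspace μ ∧ g w ≠ 0 := by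
    by_contra hcon
    push_neg at hcon
    apply hgne
    refine LinearMap.ext fun w => ?_
    have hw : w ∈ ⨆ μ, f.maxGenEigenspace μ := by
      rw [Module.End.iSup_maxGenEigenspace_eq_top]; trivial
    simp only [LinearMap.zero_apply]
    exact Submodule.iSup_induction _ (motive := fun w => g w = 0) hw (fun μ x hx => hcon μ x hx)
      (map_zero g) (fun x y hx hy => by rw [map_add, hx, hy, add_zero])
  obtain ⟨μ, w, hw, hgw⟩ := hexists
  obtain ⟨k, hk⟩ := (Module.End.mem_maxGenEigenspace f μ w).mp hw
  have hk0 : k ≠ 0 := by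
    rintro rfl
    simp only [pow_zero, Module.End.one_apply] at hk
    exact hgw (by rw [hk, map_zero])
  have hsemi : SemiconjBy g (f - μ • 1) (f - (μ + c) • 1) := by
    show g * (f - μ • 1) = (f - (μ + c) • 1) * g
    rw [sub_mul, mul_sub, hEnd, smul_mul_assoc, mul_smul_comm, one_mul, mul_one]
    module
  have hwk : ((f - (μ + c) • 1) ^ k) (g w) = 0 := by
    have := congrArg (fun (T : Module.End ℂ (Fin n → ℂ)) => T w) (hsemi.pow_right k)
    simp only [Module.End.mul_apply] at this
    rw [← this, hk, map_zero]
  have hμc : Module.End.HasEigenvalue f (μ + c) := by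
    refine Module.End.hasEigenvalue_of_hasGenEigenvalue (k := k) ?_
    rw [Module.End.hasGenEigenvalue_iff]
    refine Submodule.ne_bot_iff _ |>.mpr ⟨g w, ?_, hgw⟩
    rw [Module.End.mem_genEigenspace_nat]
    exact hwk
  have hμ : Module.End.HasEigenvalue f μ := by
    refine Module.End.hasEigenvalue_of_hasGenEigenvalue (k := k) ?_
    rw [Module.End.hasGenEigenvalue_iff]
    refine Submodule.ne_bot_iff _ |>.mpr ⟨w, ?_, fun hw0 => hgw (by rw [hw0, map_zero])⟩
    rw [Module.End.mem_genEigenspace_nat]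
    exact hk
  have hspec := AlgEquiv.spectrum_eq (Matrix.toLinAlgEquiv' (R := ℂ) (n := Fin n)) A
  exact ⟨μ, by rw [← hspec]; exact hμ.mem_spectrum, by rw [← hspec]; exact hμc.mem_spectrum⟩




lemma exp_mul_eq_sum_ad (A M : Mat) (k : ℕ)
    (hD : ∀ j, k ≤ j → ((LinearMap.mulLeft ℂ A - LinearMap.mulRight ℂ A) ^ j) M = 0) :
    exp A * M
      = (∑ i ∈ Finset.range k,
          (i.factorial : ℂ)⁻¹ • ((LinearMap.mulLeft ℂ A - LinearMap.mulRight ℂ A) ^ i) M) * exp A := by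
  classical
  set D : Module.End ℂ Mat := LinearMap.mulLeft ℂ A - LinearMap.mulRight ℂ A with hDdef
  set R : Module.End ℂ Mat := LinearMap.mulRight ℂ A with hRdef
  have hcomm : Commute R D := by
    have h1 : Commute (LinearMap.mulRight ℂ A) (LinearMap.mulLeft ℂ A) :=
      (LinearMap.commute_mulLeft_right (R := ℂ) A A).symm
    exact (h1.sub_right (Commute.refl _))
  have hRD : R + D = LinearMap.mulLeft ℂ A := by rw [hRdef, hDdef]; abel
  -- pointwise power formula
  have hpow : ∀ m : ℕ, A ^ m * M
      = ∑ i ∈ Finset.range k, (m.choose i : ℂ) • ((D ^ i) M * A ^ (m - i)) := by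
    intro m
    have h1 : A ^ m * M = ((R + D) ^ m) M := by
      rw [hRD, LinearMap.pow_mulLeft, LinearMap.mulLeft_apply]
    rw [h1, hcomm.add_pow]
    rw [LinearMap.sum_apply]
    have hterm : ∀ j ∈ Finset.range (m + 1),
        (R ^ j * D ^ (m - j) * (m.choose j : Module.End ℂ Mat)) M
          = (m.choose j : ℂ) • ((D ^ (m - j)) M * A ^ j) := by
      intro j _
      rw [Module.End.mul_apply, Module.End.mul_apply, Module.End.natCast_apply,
        map_nsmul, map_nsmul, hRdef, LinearMap.pow_mulRight, LinearMap.mulRight_apply]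
      rw [← Nat.cast_smul_eq_nsmul ℂ]
    rw [Finset.sum_congr rfl hterm]
    -- reflect the sum
    have hrefl : ∑ j ∈ Finset.range (m + 1), (m.choose j : ℂ) • ((D ^ (m - j)) M * A ^ j)
        = ∑ i ∈ Finset.range (m + 1), (m.choose i : ℂ) • ((D ^ i) M * A ^ (m - i)) := by
      rw [← Finset.sum_range_reflect]
      refine Finset.sum_congr rfl fun i hi => ?_
      rw [Finset.mem_range] at hi
      have him : i ≤ m := by omega
      have h4 : m + 1 - 1 - i = m - i := by omega
      rw [h4, Nat.sub_sub_self him, Nat.choose_symm him]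
    rw [hrefl]
    -- adjust the index set from range (m+1) to range k
    have hzero1 : ∀ i ∈ Finset.range (max (m + 1) k), i ∉ Finset.range (m + 1) →
        (m.choose i : ℂ) • ((D ^ i) M * A ^ (m - i)) = 0 := by
      intro i _ hi
      rw [Finset.mem_range, not_lt] at hi
      rw [Nat.choose_eq_zero_of_lt (by omega)]
      simp
    have hzero2 : ∀ i ∈ Finset.range (max (m + 1) k), i ∉ Finset.range k →
        (m.choose i : ℂ) • ((D ^ i) M * A ^ (m - i)) = 0 := by
      intro i _ hi
      rw [Finset.mem_range, not_lt] at hi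
      rw [hD i hi]
      simp
    rw [Finset.sum_subset (Finset.range_subset_range.mpr (le_max_left (m+1) k)) hzero1,
      ← Finset.sum_subset (Finset.range_subset_range.mpr (le_max_right (m+1) k)) hzero2]
  -- analytic part
  have hsummA : Summable fun m : ℕ => ((m.factorial : ℂ))⁻¹ • A ^ m :=
    NormedSpace.expSeries_summable' (𝕂 := ℂ) A
  set g : ℕ → ℕ → Mat := fun i m =>
    ((m.factorial : ℂ)⁻¹ * (m.choose i : ℂ)) • ((D ^ i) M * A ^ (m - i)) with hgdef
  have hgshift : ∀ i j : ℕ,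
      g i (j + i) = (i.factorial : ℂ)⁻¹ • ((D ^ i) M * ((j.factorial : ℂ)⁻¹ • A ^ j)) := by
    intro i j
    have hnat := Nat.choose_mul_factorial_mul_factorial (Nat.le_add_left i j)
    rw [Nat.add_sub_cancel] at hnat
    have hc : (((j + i).choose i : ℂ)) * (i.factorial : ℂ) * (j.factorial : ℂ)
        = ((j + i).factorial : ℂ) := by exact_mod_cast congrArg (Nat.cast : ℕ → ℂ) hnat
    have hcoeff : (((j + i).factorial : ℂ))⁻¹ * (((j + i).choose i : ℂ))
        = (i.factorial : ℂ)⁻¹ * (j.factorial : ℂ)⁻¹ := by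
      have hi0 : (i.factorial : ℂ) ≠ 0 := Nat.cast_ne_zero.mpr i.factorial_ne_zero
      have hj0 : (j.factorial : ℂ) ≠ 0 := Nat.cast_ne_zero.mpr j.factorial_ne_zero
      have hji0 : ((j + i).factorial : ℂ) ≠ 0 := Nat.cast_ne_zero.mpr (j + i).factorial_ne_zero
      field_simp
      linear_combination hc
    simp only [hgdef, Nat.add_sub_cancel]
    rw [hcoeff, mul_smul_comm, smul_smul]
  have hsumshift : ∀ i : ℕ, Summable fun j => g i (j + i) := by
    intro i
    have h1 : Summable fun j : ℕ => (D ^ i) M * ((j.factorial : ℂ)⁻¹ • A ^ j) :=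
      hsummA.mul_left _
    have h2 := h1.const_smul ((i.factorial : ℂ)⁻¹)
    refine h2.congr fun j => ?_
    rw [hgshift]
  have hsummg : ∀ i : ℕ, Summable (g i) := fun i => (summable_nat_add_iff i).mp (hsumshift i)
  have key : ∀ i ∈ Finset.range k,
      (∑' m : ℕ, g i m) = (i.factorial : ℂ)⁻¹ • ((D ^ i) M * exp A) := by
    intro i _
    have hhead : ∑ m ∈ Finset.range i, g i m = 0 := by
      refine Finset.sum_eq_zero fun m hm => ?_
      rw [Finset.mem_range] at hm
      simp only [hgdef, Nat.choose_eq_zero_of_lt hm]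
      simp
    have h1 : Summable fun j : ℕ => (D ^ i) M * ((j.factorial : ℂ)⁻¹ • A ^ j) :=
      hsummA.mul_left _
    calc ∑' m, g i m = ∑ m ∈ Finset.range i, g i m + ∑' j, g i (j + i) :=
          (Summable.sum_add_tsum_nat_add i (hsummg i)).symm
      _ = ∑' j, g i (j + i) := by rw [hhead, zero_add]
      _ = ∑' j, (i.factorial : ℂ)⁻¹ • ((D ^ i) M * ((j.factorial : ℂ)⁻¹ • A ^ j)) :=
          tsum_congr fun j => hgshift i j
      _ = (i.factorial : ℂ)⁻¹ • ∑' j, (D ^ i) M * ((j.factorial : ℂ)⁻¹ • A ^ j) :=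
          Summable.tsum_const_smul _ h1
      _ = (i.factorial : ℂ)⁻¹ • ((D ^ i) M * ∑' j, ((j.factorial : ℂ)⁻¹ • A ^ j)) := by
          rw [Summable.tsum_mul_left _ hsummA]
      _ = (i.factorial : ℂ)⁻¹ • ((D ^ i) M * exp A) := by rw [exp_eq_tsum ℂ]
  calc exp A * M = (∑' m : ℕ, ((m.factorial : ℂ))⁻¹ • A ^ m) * M := by
        simp only [exp_eq_tsum ℂ]
    _ = ∑' m : ℕ, (((m.factorial : ℂ))⁻¹ • A ^ m) * M :=
        (Summable.tsum_mul_right M hsummA).symm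
    _ = ∑' m : ℕ, ∑ i ∈ Finset.range k, g i m := by
        refine tsum_congr fun m => ?_
        rw [smul_mul_assoc, hpow m, Finset.smul_sum]
        refine Finset.sum_congr rfl fun i _ => ?_
        rw [smul_smul]
    _ = ∑ i ∈ Finset.range k, ∑' m : ℕ, g i m := Summable.tsum_finsetSum fun i _ => hsummg i
    _ = ∑ i ∈ Finset.range k, (i.factorial : ℂ)⁻¹ • ((D ^ i) M * exp A) :=
        Finset.sum_congr rfl key
    _ = (∑ i ∈ Finset.range k, (i.factorial : ℂ)⁻¹ • (D ^ i) M) * exp A := by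
        rw [Finset.sum_mul]
        exact Finset.sum_congr rfl fun i _ => (smul_mul_assoc _ _ _).symm


end PrincipalLogCommutesAux

end PrincipalLogCommutesAuxSection

open PrincipalLogCommutesAux in
/-- If `A` is the principal logarithm of a real matrix `X` having no complex eigenvalue in
`(−∞, 0]`, then `log X = A` commutes with every matrix that commutes with `X`. -/
theorem principal_log_commutes {n : ℕ} (X A : Matrix (Fin n) (Fin n) ℝ)
    (hX : ∀ z ∈ spectrum ℂ (X.map (Complex.ofReal)), ¬ (z.im = 0 ∧ z.re ≤ 0))
    (hexp : NormedSpace.exp A = X)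
    (hstrip : ∀ z ∈ spectrum ℂ (A.map (Complex.ofReal)), -Real.pi < z.im ∧ z.im < Real.pi)
    (B : Matrix (Fin n) (Fin n) ℝ) (hB : B * X = X * B) :
    B * A = A * B := by
  classical
  letI : SeminormedRing (Matrix (Fin n) (Fin n) ℝ) := Matrix.linftyOpSemiNormedRing
  letI : NormedRing (Matrix (Fin n) (Fin n) ℝ) := Matrix.linftyOpNormedRing
  letI : NormedAlgebra ℝ (Matrix (Fin n) (Fin n) ℝ) := Matrix.linftyOpNormedAlgebra
  letI : NormedAlgebra ℚ (Matrix (Fin n) (Fin n) ℝ) := Matrix.linftyOpNormedAlgebra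
  letI : SeminormedRing (Matrix (Fin n) (Fin n) ℂ) := Matrix.linftyOpSemiNormedRing
  letI : NormedRing (Matrix (Fin n) (Fin n) ℂ) := Matrix.linftyOpNormedRing
  letI : NormedAlgebra ℝ (Matrix (Fin n) (Fin n) ℂ) := Matrix.linftyOpNormedAlgebra
  letI : NormedAlgebra ℂ (Matrix (Fin n) (Fin n) ℂ) := Matrix.linftyOpNormedAlgebra
  have hexp' : NormedSpace.exp A = X := hexp
  set φ : Matrix (Fin n) (Fin n) ℝ →+* Matrix (Fin n) (Fin n) ℂ :=
    Complex.ofRealHom.mapMatrix with hφdef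
  have hφcont : Continuous φ := by
    simp only [hφdef]
    show Continuous fun M : Matrix (Fin n) (Fin n) ℝ => M.map Complex.ofRealHom
    exact continuous_id.matrix_map Complex.continuous_ofReal
  set A' : Matrix (Fin n) (Fin n) ℂ := φ A with hA'def
  set X' : Matrix (Fin n) (Fin n) ℂ := φ X with hX'def
  set B' : Matrix (Fin n) (Fin n) ℂ := φ B with hB'def
  have hexpC : NormedSpace.exp A' = X' := by
    erw [hA'def, ← NormedSpace.map_exp φ hφcont, hexp']
  have hstripA : ∀ z ∈ spectrum ℂ A', -Real.pi < z.im ∧ z.im < Real.pi := by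
    have : A' = A.map Complex.ofReal := rfl
    rw [this]; exact hstrip
  have hB'X' : X' * B' = B' * X' := by
    rw [hX'def, hB'def, ← map_mul, ← map_mul, hB]
  have hcommAX : A' * X' = X' * A' := by
    rw [← hexpC]
    exact ((Commute.refl A').exp_right).eq
  have hXunit : IsUnit X' := hexpC ▸ Matrix.isUnit_exp A'
  obtain ⟨u, hu⟩ := hXunit
  -- the commutant of X' as a submodule
  set K : Submodule ℂ (Matrix (Fin n) (Fin n) ℂ) :=
    { carrier := {M | X' * M = M * X'}
      add_mem' := fun {a b} ha hb => by
        simp only [Set.mem_setOf_eq] at *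
        rw [mul_add, add_mul, ha, hb]
      zero_mem' := by simp
      smul_mem' := fun c M hM => by
        simp only [Set.mem_setOf_eq] at *
        rw [mul_smul_comm, smul_mul_assoc, hM] } with hKdef
  have hmemK : ∀ M : Matrix (Fin n) (Fin n) ℂ, M ∈ K ↔ X' * M = M * X' := fun M => Iff.rfl
  set D : Module.End ℂ (Matrix (Fin n) (Fin n) ℂ) :=
    LinearMap.mulLeft ℂ A' - LinearMap.mulRight ℂ A' with hDdef
  have hDapp : ∀ M, D M = A' * M - M * A' := fun M => by
    simp [hDdef, LinearMap.sub_apply]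
  have hDK : ∀ M ∈ K, D M ∈ K := by
    intro M hM
    rw [hmemK] at hM
    rw [hmemK, hDapp]
    have e1 : X' * (A' * M) = A' * M * X' := by
      rw [← mul_assoc, ← hcommAX, mul_assoc, hM, ← mul_assoc]
    have e2 : X' * (M * A') = M * A' * X' := by
      rw [← mul_assoc, hM, mul_assoc, ← hcommAX, ← mul_assoc]
    rw [mul_sub, sub_mul, e1, e2]
  set L : Module.End ℂ K := D.restrict hDK with hLdef
  -- every eigenvalue of L is zero
  have heig0 : ∀ μ : ℂ, Module.End.HasEigenvalue L μ → μ = 0 := by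
    intro μ hμeig
    obtain ⟨v, hv⟩ := hμeig.exists_hasEigenvector
    set B₀ : Matrix (Fin n) (Fin n) ℂ := (v : Matrix (Fin n) (Fin n) ℂ) with hB₀def
    have hB₀ : B₀ ≠ 0 := fun h0 => hv.right (by
      apply Subtype.ext
      exact h0)
    have hB₀K : X' * B₀ = B₀ * X' := v.2
    have happ : D B₀ = μ • B₀ := by
      have h1 := congrArg (Subtype.val) hv.apply_eq_smul
      rw [hLdef, LinearMap.restrict_coe_apply] at h1
      exact h1
    have hADB : A' * B₀ = B₀ * A' + μ • B₀ := by
      rw [hDapp] at happ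
      rw [← happ]; abel
    -- first: exp μ = 1
    have hswap : A' * B₀ = B₀ * (A' + μ • 1) := by
      rw [mul_add, mul_smul_comm, mul_one, hADB]
    have h3 := exp_swap A' (A' + μ • 1) B₀ hswap
    have h4 : NormedSpace.exp (A' + μ • (1 : Matrix (Fin n) (Fin n) ℂ))
        = NormedSpace.exp A' * (Complex.exp μ • 1) := by
      have hcs : Commute A' ((μ : ℂ) • (1 : Matrix (Fin n) (Fin n) ℂ)) :=
        (Commute.one_right A').smul_right μ
      rw [Matrix.exp_add_of_commute A' (μ • 1) hcs]
      congr 1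
      have h5 : (μ • (1 : Matrix (Fin n) (Fin n) ℂ))
          = algebraMap ℂ (Matrix (Fin n) (Fin n) ℂ) μ := (Algebra.algebraMap_eq_smul_one μ).symm
      erw [h5, ← NormedSpace.map_exp (algebraMap ℂ (Matrix (Fin n) (Fin n) ℂ))
        (continuous_algebraMap ℂ _) μ, ← Complex.exp_eq_exp_ℂ, Algebra.algebraMap_eq_smul_one]
    have h6 : X' * B₀ = Complex.exp μ • (B₀ * X') := by
      rw [← hexpC, h3, h4, ← mul_assoc, mul_smul_comm, mul_one]
    rw [hB₀K] at h6
    have hBX0 : B₀ * X' ≠ 0 := by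
      intro h0
      apply hB₀
      have h7 : B₀ * (X' * (↑u⁻¹ : Matrix (Fin n) (Fin n) ℂ)) = 0 := by rw [← mul_assoc, h0, zero_mul]
      rw [← hu, Units.mul_inv, mul_one] at h7
      exact h7
    have hexp1 : Complex.exp μ = 1 := by
      by_contra hne
      apply hBX0
      have h8 : (1 - Complex.exp μ) • (B₀ * X') = 0 := by
        rw [sub_smul, one_smul, ← h6, sub_self]
      rcases smul_eq_zero.mp h8 with h9 | h9
      · exact absurd (by linear_combination -h9 : Complex.exp μ = 1) hne
      · exact h9
    -- second: μ is a difference of eigenvalues of A'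
    obtain ⟨ν, hν1, hν2⟩ := exists_spec_pair A' B₀ hB₀ μ hADB
    obtain ⟨hb1, hb2⟩ := hstripA ν hν1
    obtain ⟨hc1, hc2⟩ := hstripA (ν + μ) hν2
    obtain ⟨m, hm⟩ := Complex.exp_eq_one_iff.mp hexp1
    have hIm : μ.im = (m : ℝ) * (2 * Real.pi) := by
      rw [hm]
      simp [Complex.mul_im]
    have hμim : μ.im = (ν + μ).im - ν.im := by simp [Complex.add_im]
    have hπ := Real.pi_pos
    have hm0 : m = 0 := by
      have hmlt : (m : ℝ) < 1 := by nlinarith [hIm, hμim, hb1, hb2, hc1, hc2]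
      have hmgt : (-1 : ℝ) < (m : ℝ) := by nlinarith [hIm, hμim, hb1, hb2, hc1, hc2]
      have h2 : m < 1 := by exact_mod_cast hmlt
      have h3 : (-1 : ℤ) < m := by exact_mod_cast hmgt
      omega
    rw [hm0] at hm
    simpa using hm
  -- hence L is nilpotent
  have hnil : IsNilpotent L := by
    rw [LinearMap.isNilpotent_iff_charpoly, LinearMap.charpoly_eq_X_pow_iff]
    intro v
    have hv : v ∈ ⨆ μ, L.maxGenEigenspace μ := by
      rw [Module.End.iSup_maxGenEigenspace_eq_top]; trivial
    refine Submodule.iSup_induction _ (motive := fun w => ∃ j, (L ^ j) w = 0) hv ?_ ⟨0, by simp⟩ ?_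
    · intro μ x hx
      by_cases hμ : μ = 0
      · subst hμ
        obtain ⟨j, hj⟩ := (Module.End.mem_maxGenEigenspace L 0 x).mp hx
        have hL0 : L - (0 : ℂ) • (1 : Module.End ℂ K) = L := by
          refine LinearMap.ext fun y => ?_
          simp
        rw [hL0] at hj
        exact ⟨j, hj⟩
      · have hx0 : x = 0 := by
          by_contra hx0
          obtain ⟨kk, hkk⟩ := (Module.End.mem_maxGenEigenspace L μ x).mp hx
          have hkk0 : kk ≠ 0 := by
            rintro rfl
            simp only [pow_zero, Module.End.one_apply] at hkk
            exact hx0 hkk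
          have : Module.End.HasEigenvalue L μ := by
            refine Module.End.hasEigenvalue_of_hasGenEigenvalue (k := kk) ?_
            rw [Module.End.hasGenEigenvalue_iff]
            refine Submodule.ne_bot_iff _ |>.mpr ⟨x, ?_, hx0⟩
            rw [Module.End.mem_genEigenspace_nat]
            exact hkk
          exact hμ (heig0 μ this)
        exact ⟨0, by simp [hx0]⟩
    · rintro x y ⟨j1, h1⟩ ⟨j2, h2⟩
      refine ⟨j1 + j2, ?_⟩
      have e1 : (L ^ (j1 + j2)) x = 0 := by
        rw [add_comm, pow_add, Module.End.mul_apply, h1, map_zero]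
      have e2 : (L ^ (j1 + j2)) y = 0 := by
        rw [pow_add, Module.End.mul_apply, h2, map_zero]
      rw [map_add, e1, e2, add_zero]
  obtain ⟨k, hk⟩ := hnil
  have hDk : ∀ M ∈ K, (D ^ k) M = 0 := by
    intro M hM
    have h0 : ((L) ^ k) ⟨M, hM⟩ = 0 := by rw [hk]; rfl
    rw [hLdef, Module.End.pow_restrict] at h0
    have h1 := congrArg Subtype.val h0
    rwa [LinearMap.restrict_coe_apply] at h1
  have hjK : ∀ j, (D ^ j) B' ∈ K := by
    intro j
    induction j with
    | zero => simpa using ((hmemK B').mpr hB'X')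
    | succ j ih =>
        rw [pow_succ', Module.End.mul_apply]
        exact hDK _ ih
  have hDge : ∀ M ∈ K, ∀ j, k ≤ j → (D ^ j) M = 0 := by
    intro M hM j hj
    have h2 : D ^ j = D ^ (j - k) * D ^ k := by
      rw [← pow_add]; congr 1; omega
    rw [h2, Module.End.mul_apply, hDk M hM, map_zero]
  set k' : ℕ := k + 2 with hk'def
  have hsum0 : ∀ M ∈ K, ∑ i ∈ Finset.Ico 1 k', (i.factorial : ℂ)⁻¹ • (D ^ i) M = 0 := by
    intro M hM
    have hid := exp_mul_eq_sum_ad A' M k' (fun j hj => hDge M hM j (by omega))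
    rw [hexpC, (hmemK M).mp hM] at hid
    have hcancel : M = ∑ i ∈ Finset.range k', (i.factorial : ℂ)⁻¹ • (D ^ i) M := by
      have h7 := congrArg (fun C => C * (↑u⁻¹ : Matrix (Fin n) (Fin n) ℂ)) hid
      beta_reduce at h7
      rw [mul_assoc, mul_assoc, ← hu, Units.mul_inv, mul_one, mul_one] at h7
      exact h7
    have hsplit : ∑ i ∈ Finset.range k', (i.factorial : ℂ)⁻¹ • (D ^ i) M
        = M + ∑ i ∈ Finset.Ico 1 k', (i.factorial : ℂ)⁻¹ • (D ^ i) M := by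
      rw [Finset.range_eq_Ico, Finset.sum_eq_sum_Ico_succ_bot (by omega : 0 < k')]
      congr 1
      simp [Nat.factorial]
    rw [hsplit] at hcancel
    exact (left_eq_add.mp hcancel)
  have hstep : ∀ m : ℕ, 1 ≤ m → (D ^ (m + 1)) B' = 0 → (D ^ m) B' = 0 := by
    intro m hm hnext
    have h := hsum0 ((D ^ (m - 1)) B') (hjK (m - 1))
    have hcomp : ∀ i : ℕ, (D ^ i) ((D ^ (m - 1)) B') = (D ^ (i + (m - 1))) B' := fun i => by
      rw [← Module.End.mul_apply, ← pow_add]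
    have hzero : ∀ i ∈ Finset.Ico 1 k', i ≠ 1 →
        (i.factorial : ℂ)⁻¹ • (D ^ i) ((D ^ (m - 1)) B') = 0 := by
      intro i hi hne
      rw [Finset.mem_Ico] at hi
      rw [hcomp i]
      have h2 : D ^ (i + (m - 1)) = D ^ (i + (m - 1) - (m + 1)) * D ^ (m + 1) := by
        rw [← pow_add]; congr 1; omega
      rw [h2, Module.End.mul_apply, hnext, map_zero, smul_zero]
    have h1mem : (1 : ℕ) ∈ Finset.Ico 1 k' := by
      rw [Finset.mem_Ico]; omega
    rw [Finset.sum_eq_single_of_mem 1 h1mem hzero] at h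
    rw [hcomp 1] at h
    have h3 : 1 + (m - 1) = m := by omega
    rw [h3] at h
    simpa [Nat.factorial] using h
  have hdesc : ∀ d : ℕ, ∀ m : ℕ, 1 ≤ m → k' ≤ m + d → (D ^ m) B' = 0 := by
    intro d
    induction d with
    | zero =>
        intro m hm hmk
        exact hDge B' ((hmemK B').mpr hB'X') m (by omega)
    | succ d ih =>
        intro m hm hmk
        by_cases hcase : k' ≤ m + d
        · exact ih m hm hcase
        · exact hstep m hm (ih (m + 1) (by omega) (by omega))
  have hDB : D B' = 0 := by
    have := hdesc k' 1 (by omega) (by omega)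
    simpa using this
  have hfin : A' * B' = B' * A' := by
    rw [hDapp] at hDB
    have := sub_eq_zero.mp hDB
    exact this
  -- descend to ℝ
  have hφinj : Function.Injective φ := by
    intro M N h
    ext i j
    have h1 := congrArg (fun C : Matrix (Fin n) (Fin n) ℂ => C i j) h
    simpa [hφdef, RingHom.mapMatrix_apply, Matrix.map_apply] using h1
  apply hφinj
  rw [map_mul, map_mul]
  exact (hfin.symm : φ B * φ A = φ A * φ B)
end

section
/- Let X, X̂ : [0,∞) → ℝ^{n×n} with X(t) invertible for all t, and suppose there are constants K₁, K₂ > 0 with ‖X(t)‖ ≤ K₁ and ‖X(t)⁻¹‖ ≤ K₂ for all t ≥ 0. Define the right-invariant error E_r(t) = X̂(t) X(t)⁻¹. If there exist m, α > 0 such that ‖E_r(t) − Iₙ‖ ≤ m e^{−α t} ‖E_r(0) − Iₙ‖ for all t ≥ 0, then ‖X̂(t) − X(t)‖ ≤ K₁ K₂ m e^{−α t} ‖X̂(0) − X(0)‖ for all t ≥ 0. -/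
open scoped Matrix.Norms.L2Operator

/-- If `‖X(t)‖ ≤ K₁`, `‖X(t)⁻¹‖ ≤ K₂` and the right-invariant error
`E_r(t) = X̂(t) X(t)⁻¹` converges exponentially to `Iₙ`, then `X̂(t) → X(t)` exponentially:
`‖X̂(t) − X(t)‖ ≤ K₁ K₂ m e^{−α t} ‖X̂(0) − X(0)‖` for all `t ≥ 0`. -/
theorem error_norm_convergence {n : ℕ} (X Xhat : ℝ → Matrix (Fin n) (Fin n) ℝ)
    (hinv : ∀ t : ℝ, IsUnit (X t))
    (K₁ K₂ : ℝ) (hK₁ : 0 < K₁) (hK₂ : 0 < K₂)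
    (hXb : ∀ t : ℝ, 0 ≤ t → ‖X t‖ ≤ K₁)
    (hXinvb : ∀ t : ℝ, 0 ≤ t → ‖(X t)⁻¹‖ ≤ K₂)
    (m α : ℝ) (hm : 0 < m) (hα : 0 < α)
    (hEr : ∀ t : ℝ, 0 ≤ t →
      ‖Xhat t * (X t)⁻¹ - 1‖ ≤ m * Real.exp (-α * t) * ‖Xhat 0 * (X 0)⁻¹ - 1‖) :
    ∀ t : ℝ, 0 ≤ t →
      ‖Xhat t - X t‖ ≤ K₁ * K₂ * m * Real.exp (-α * t) * ‖Xhat 0 - X 0‖ := by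
  intro t ht
  have hcancel : ∀ s : ℝ, X s * (X s)⁻¹ = 1 ∧ (X s)⁻¹ * X s = 1 := fun s =>
    ⟨Matrix.mul_nonsing_inv _ ((Matrix.isUnit_iff_isUnit_det _).mp (hinv s)),
     Matrix.nonsing_inv_mul _ ((Matrix.isUnit_iff_isUnit_det _).mp (hinv s))⟩
  have key : ∀ s : ℝ, Xhat s - X s = (Xhat s * (X s)⁻¹ - 1) * X s := by
    intro s
    rw [sub_mul, one_mul, mul_assoc, (hcancel s).2, mul_one]
  have key0 : Xhat 0 * (X 0)⁻¹ - 1 = (Xhat 0 - X 0) * (X 0)⁻¹ := by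
    rw [sub_mul, ← (hcancel 0).1]
  calc ‖Xhat t - X t‖ = ‖(Xhat t * (X t)⁻¹ - 1) * X t‖ := by rw [key t]
    _ ≤ ‖Xhat t * (X t)⁻¹ - 1‖ * ‖X t‖ := norm_mul_le _ _
    _ ≤ (m * Real.exp (-α * t) * ‖Xhat 0 * (X 0)⁻¹ - 1‖) * K₁ := by
        apply mul_le_mul (hEr t ht) (hXb t ht) (norm_nonneg _)
        positivity
    _ ≤ (m * Real.exp (-α * t) * (‖Xhat 0 - X 0‖ * K₂)) * K₁ := by
        apply mul_le_mul_of_nonneg_right _ hK₁.le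
        apply mul_le_mul_of_nonneg_left _ (by positivity)
        rw [key0]
        calc ‖(Xhat 0 - X 0) * (X 0)⁻¹‖ ≤ ‖Xhat 0 - X 0‖ * ‖(X 0)⁻¹‖ := norm_mul_le _ _
          _ ≤ ‖Xhat 0 - X 0‖ * K₂ :=
            mul_le_mul_of_nonneg_left (hXinvb 0 le_rfl) (norm_nonneg _)
    _ = K₁ * K₂ * m * Real.exp (-α * t) * ‖Xhat 0 - X 0‖ := by ring
end

section
/- Let 0 < r < 1 and let E : ℝ → ℝ^{n×n} be differentiable with ‖E(s) − Iₙ‖ ≤ r for all s, and suppose that for every s the derivative Ė(s) commutes with E(s). Then the curve e(s) = log(E(s)) is differentiable and for every t, ė(t) = E(t)⁻¹ Ė(t). -/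
open scoped Matrix.Norms.L2Operator

/-- The principal matrix logarithm, defined by the convergent series
`log X = ∑_{k=1}^∞ ((−1)^{k+1}/k) (X − I)^k` (here re-indexed over `k : ℕ`). -/
noncomputable def mlog {n : ℕ} (X : Matrix (Fin n) (Fin n) ℝ) : Matrix (Fin n) (Fin n) ℝ :=
  ∑' k : ℕ, (((-1 : ℝ) ^ k / (k + 1)) • (X - 1) ^ (k + 1))

private lemma pow_key_bound {n : ℕ} {r : ℝ} (hr0 : 0 < r)
    (A B M : Matrix (Fin n) (Fin n) ℝ)
    (hA : ‖A‖ ≤ r) (hB : ‖B‖ ≤ r) (hBM : B * M = M * B) :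
    ∀ k : ℕ, ‖A ^ (k+1) - B ^ (k+1) - ((k : ℝ) + 1) • (B ^ k * M)‖ ≤
      ((k : ℝ) + 1) * r ^ k * ‖A - B - M‖ +
        ((k : ℝ) * ((k : ℝ) + 1) / 2) * (r ^ k / r) * (‖A - B‖ * ‖M‖) := by
  intro k
  induction k with
  | zero => simp
  | succ k ih =>
    have hMB : Commute M B := hBM.symm
    have h2 : M * B ^ (k+1) = B ^ (k+1) * M := (hMB.pow_right (k+1)).eq
    have hid : A ^ (k+1+1) - B ^ (k+1+1) - (((k:ℝ)+1)+1) • (B ^ (k+1) * M)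
        = A * (A ^ (k+1) - B ^ (k+1) - ((k:ℝ)+1) • (B ^ k * M))
          + ((k:ℝ)+1) • ((A - B) * (B ^ k * M))
          + (A - B - M) * B ^ (k+1) := by
      have e1 : A ^ (k+1+1) = A * A ^ (k+1) := pow_succ' A (k+1)
      have e2 : B ^ (k+1+1) = B * B ^ (k+1) := pow_succ' B (k+1)
      have e3 : B ^ (k+1) * M = B * (B ^ k * M) := by
        rw [← mul_assoc, ← pow_succ']
      rw [e1, e2, e3]
      simp only [mul_sub, sub_mul, mul_smul_comm, smul_mul_assoc]
      rw [h2.trans e3]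
      module
    have hnorm : ‖A ^ (k+1+1) - B ^ (k+1+1) - (((k:ℝ)+1)+1) • (B ^ (k+1) * M)‖
        ≤ r * ‖A ^ (k+1) - B ^ (k+1) - ((k:ℝ)+1) • (B ^ k * M)‖
          + ((k:ℝ)+1) * (‖A - B‖ * (r ^ k * ‖M‖))
          + ‖A - B - M‖ * r ^ (k+1) := by
      rw [hid]
      have hBk : ‖B ^ k * M‖ ≤ r ^ k * ‖M‖ := by
        cases k with
        | zero => simp
        | succ k =>
          calc ‖B ^ (k+1) * M‖ ≤ ‖B ^ (k+1)‖ * ‖M‖ := norm_mul_le _ _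
            _ ≤ r ^ (k+1) * ‖M‖ := by
                have := (norm_pow_le' B (Nat.succ_pos k)).trans
                  (pow_le_pow_left₀ (norm_nonneg _) hB (k+1))
                exact mul_le_mul_of_nonneg_right this (norm_nonneg _)
      have hBk1 : ‖B ^ (k+1)‖ ≤ r ^ (k+1) :=
        (norm_pow_le' B (Nat.succ_pos k)).trans (pow_le_pow_left₀ (norm_nonneg _) hB (k+1))
      calc ‖_ + _ + _‖ ≤ ‖A * (A ^ (k+1) - B ^ (k+1) - ((k:ℝ)+1) • (B ^ k * M))
              + ((k:ℝ)+1) • ((A - B) * (B ^ k * M))‖ + ‖(A - B - M) * B ^ (k+1)‖ :=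
            norm_add_le _ _
        _ ≤ ‖A * (A ^ (k+1) - B ^ (k+1) - ((k:ℝ)+1) • (B ^ k * M))‖
              + ‖((k:ℝ)+1) • ((A - B) * (B ^ k * M))‖ + ‖(A - B - M) * B ^ (k+1)‖ := by
            gcongr; exact norm_add_le _ _
        _ ≤ r * ‖A ^ (k+1) - B ^ (k+1) - ((k:ℝ)+1) • (B ^ k * M)‖
              + ((k:ℝ)+1) * (‖A - B‖ * (r ^ k * ‖M‖))
              + ‖A - B - M‖ * r ^ (k+1) := by
            gcongr ?_ + ?_ + ?_
            · exact (norm_mul_le _ _).trans (by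
                have h0 : (0:ℝ) ≤ ‖A ^ (k+1) - B ^ (k+1) - ((k:ℝ)+1) • (B ^ k * M)‖ :=
                  norm_nonneg _
                exact mul_le_mul_of_nonneg_right hA h0)
            · rw [norm_smul]
              have : ‖(A - B) * (B ^ k * M)‖ ≤ ‖A - B‖ * (r ^ k * ‖M‖) :=
                (norm_mul_le _ _).trans (mul_le_mul_of_nonneg_left hBk (norm_nonneg _))
              calc ‖((k:ℝ)+1)‖ * ‖(A - B) * (B ^ k * M)‖
                  = ((k:ℝ)+1) * ‖(A - B) * (B ^ k * M)‖ := by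
                    rw [Real.norm_eq_abs, abs_of_nonneg (by positivity)]
                _ ≤ ((k:ℝ)+1) * (‖A - B‖ * (r ^ k * ‖M‖)) := by
                    exact mul_le_mul_of_nonneg_left this (by positivity)
            · exact (norm_mul_le _ _).trans
                (mul_le_mul_of_nonneg_left hBk1 (norm_nonneg _))
    push_cast
    push_cast at ih
    calc ‖A ^ (k+1+1) - B ^ (k+1+1) - (((k:ℝ)+1)+1) • (B ^ (k+1) * M)‖
        ≤ r * ‖A ^ (k+1) - B ^ (k+1) - ((k:ℝ)+1) • (B ^ k * M)‖
          + ((k:ℝ)+1) * (‖A - B‖ * (r ^ k * ‖M‖))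
          + ‖A - B - M‖ * r ^ (k+1) := hnorm
      _ ≤ r * (((k:ℝ)+1) * r ^ k * ‖A - B - M‖
            + ((k:ℝ) * ((k:ℝ)+1) / 2) * (r ^ k / r) * (‖A - B‖ * ‖M‖))
          + ((k:ℝ)+1) * (‖A - B‖ * (r ^ k * ‖M‖))
          + ‖A - B - M‖ * r ^ (k+1) := by
          gcongr
      _ = (((k:ℝ)+1)+1) * r ^ (k+1) * ‖A - B - M‖
          + (((k:ℝ)+1) * (((k:ℝ)+1)+1) / 2) * (r ^ (k+1) / r) * (‖A - B‖ * ‖M‖) := by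
          field_simp
          ring

private lemma mlog_key {n : ℕ} {r : ℝ} (hr0 : 0 < r) (hr1 : r < 1)
    (X Y M : Matrix (Fin n) (Fin n) ℝ)
    (hX : ‖X - 1‖ ≤ r) (hY : ‖Y - 1‖ ≤ r)
    (hcomm : (Y - 1) * M = M * (Y - 1)) :
    ‖mlog X - mlog Y - ∑' k : ℕ, ((-1:ℝ)^k) • ((Y - 1) ^ k * M)‖ ≤
      (∑' k : ℕ, r ^ k) * ‖X - Y - M‖ +
      ((∑' k : ℕ, (k:ℝ) * r ^ k) / (2 * r)) * (‖X - Y‖ * ‖M‖) := by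
  set A := X - 1 with hAdef
  set B := Y - 1 with hBdef
  have hXY : A - B = X - Y := by rw [hAdef, hBdef]; abel
  have hApow : ∀ k : ℕ, ‖A ^ (k+1)‖ ≤ r ^ (k+1) := fun k =>
    (norm_pow_le' A (Nat.succ_pos k)).trans (pow_le_pow_left₀ (norm_nonneg _) hX (k+1))
  have hBpow : ∀ k : ℕ, ‖B ^ (k+1)‖ ≤ r ^ (k+1) := fun k =>
    (norm_pow_le' B (Nat.succ_pos k)).trans (pow_le_pow_left₀ (norm_nonneg _) hY (k+1))
  have hBkM : ∀ k : ℕ, ‖B ^ k * M‖ ≤ r ^ k * ‖M‖ := by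
    intro k
    cases k with
    | zero => simp
    | succ k =>
      exact (norm_mul_le _ _).trans (mul_le_mul_of_nonneg_right (hBpow k) (norm_nonneg _))
  have hge : Summable (fun k : ℕ => r ^ k) := summable_geometric_of_lt_one hr0.le hr1
  have hge1 : Summable (fun k : ℕ => r ^ (k+1)) := by
    simpa [pow_succ] using hge.mul_right r
  have hkge : Summable (fun k : ℕ => (k:ℝ) * r ^ k) := by
    have h := summable_pow_mul_geometric_of_norm_lt_one (R := ℝ) 1
      (by rwa [Real.norm_eq_abs, abs_of_pos hr0])
    simpa using h
  have habs : ∀ k : ℕ, ‖(-1:ℝ)^k / ((k:ℝ)+1)‖ = 1 / ((k:ℝ)+1) := by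
    intro k
    rw [Real.norm_eq_abs, abs_div, abs_pow, abs_neg, abs_one, one_pow,
      abs_of_pos (by positivity : (0:ℝ) < (k:ℝ)+1)]
  have hcle : ∀ k : ℕ, ‖(-1:ℝ)^k / ((k:ℝ)+1)‖ ≤ 1 := by
    intro k
    rw [habs k]
    rw [div_le_one (by positivity)]
    linarith [Nat.cast_nonneg (α := ℝ) k]
  have S1 : Summable (fun k : ℕ => ((-1:ℝ)^k / ((k:ℝ)+1)) • A ^ (k+1)) := by
    refine Summable.of_norm_bounded hge1 fun k => ?_
    rw [norm_smul]
    calc ‖(-1:ℝ)^k / ((k:ℝ)+1)‖ * ‖A ^ (k+1)‖ ≤ 1 * r ^ (k+1) :=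
          mul_le_mul (hcle k) (hApow k) (norm_nonneg _) zero_le_one
      _ = r ^ (k+1) := one_mul _
  have S2 : Summable (fun k : ℕ => ((-1:ℝ)^k / ((k:ℝ)+1)) • B ^ (k+1)) := by
    refine Summable.of_norm_bounded hge1 fun k => ?_
    rw [norm_smul]
    calc ‖(-1:ℝ)^k / ((k:ℝ)+1)‖ * ‖B ^ (k+1)‖ ≤ 1 * r ^ (k+1) :=
          mul_le_mul (hcle k) (hBpow k) (norm_nonneg _) zero_le_one
      _ = r ^ (k+1) := one_mul _
  have S3 : Summable (fun k : ℕ => ((-1:ℝ)^k) • (B ^ k * M)) := by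
    refine Summable.of_norm_bounded (hge.mul_right ‖M‖) fun k => ?_
    rw [norm_smul, Real.norm_eq_abs, abs_pow, abs_neg, abs_one, one_pow, one_mul]
    exact hBkM k
  have hmlX : mlog X = ∑' k : ℕ, ((-1:ℝ)^k / ((k:ℝ)+1)) • A ^ (k+1) := rfl
  have hmlY : mlog Y = ∑' k : ℕ, ((-1:ℝ)^k / ((k:ℝ)+1)) • B ^ (k+1) := rfl
  have hsplit : mlog X - mlog Y - ∑' k : ℕ, ((-1:ℝ)^k) • (B ^ k * M)
      = ∑' k : ℕ, (((-1:ℝ)^k / ((k:ℝ)+1)) • A ^ (k+1)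
          - ((-1:ℝ)^k / ((k:ℝ)+1)) • B ^ (k+1) - ((-1:ℝ)^k) • (B ^ k * M)) := by
    rw [hmlX, hmlY, ← Summable.tsum_sub S1 S2, ← Summable.tsum_sub (S1.sub S2) S3]
  have hterm : ∀ k : ℕ, ((-1:ℝ)^k / ((k:ℝ)+1)) • A ^ (k+1)
      - ((-1:ℝ)^k / ((k:ℝ)+1)) • B ^ (k+1) - ((-1:ℝ)^k) • (B ^ k * M)
      = ((-1:ℝ)^k / ((k:ℝ)+1)) •
          (A ^ (k+1) - B ^ (k+1) - ((k:ℝ)+1) • (B ^ k * M)) := by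
    intro k
    have hk : ((k:ℝ)+1) ≠ 0 := by positivity
    rw [smul_sub, smul_sub, smul_smul, div_mul_cancel₀ _ hk]
  have hu : Summable (fun k : ℕ => r ^ k * ‖X - Y - M‖
      + ((k:ℝ) * r ^ k) * ((‖X - Y‖ * ‖M‖) / (2 * r))) :=
    (hge.mul_right _).add (hkge.mul_right _)
  have hbound : ∀ k : ℕ, ‖((-1:ℝ)^k / ((k:ℝ)+1)) •
      (A ^ (k+1) - B ^ (k+1) - ((k:ℝ)+1) • (B ^ k * M))‖
      ≤ r ^ k * ‖X - Y - M‖ + ((k:ℝ) * r ^ k) * ((‖X - Y‖ * ‖M‖) / (2 * r)) := by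
    intro k
    have hP := pow_key_bound hr0 A B M hX hY hcomm k
    rw [hXY] at hP
    rw [norm_smul, habs k]
    calc (1 / ((k:ℝ)+1)) * ‖A ^ (k+1) - B ^ (k+1) - ((k:ℝ)+1) • (B ^ k * M)‖
        ≤ (1 / ((k:ℝ)+1)) * (((k:ℝ)+1) * r ^ k * ‖X - Y - M‖
            + ((k:ℝ) * ((k:ℝ)+1) / 2) * (r ^ k / r) * (‖X - Y‖ * ‖M‖)) := by
          exact mul_le_mul_of_nonneg_left hP (by positivity)
      _ = r ^ k * ‖X - Y - M‖ + ((k:ℝ) * r ^ k) * ((‖X - Y‖ * ‖M‖) / (2 * r)) := by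
          have hk : ((k:ℝ)+1) ≠ 0 := by positivity
          field_simp
  rw [hsplit, tsum_congr hterm]
  have hSnorm : Summable (fun k : ℕ => ‖((-1:ℝ)^k / ((k:ℝ)+1)) •
      (A ^ (k+1) - B ^ (k+1) - ((k:ℝ)+1) • (B ^ k * M))‖) :=
    Summable.of_nonneg_of_le (fun k => norm_nonneg _) hbound hu
  calc ‖∑' k : ℕ, ((-1:ℝ)^k / ((k:ℝ)+1)) •
        (A ^ (k+1) - B ^ (k+1) - ((k:ℝ)+1) • (B ^ k * M))‖
      ≤ ∑' k : ℕ, ‖((-1:ℝ)^k / ((k:ℝ)+1)) •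
        (A ^ (k+1) - B ^ (k+1) - ((k:ℝ)+1) • (B ^ k * M))‖ :=
        norm_tsum_le_tsum_norm hSnorm
    _ ≤ ∑' k : ℕ, (r ^ k * ‖X - Y - M‖
        + ((k:ℝ) * r ^ k) * ((‖X - Y‖ * ‖M‖) / (2 * r))) :=
        Summable.tsum_le_tsum hbound hSnorm hu
    _ = (∑' k : ℕ, r ^ k) * ‖X - Y - M‖
        + (∑' k : ℕ, (k:ℝ) * r ^ k) * ((‖X - Y‖ * ‖M‖) / (2 * r)) := by
        rw [Summable.tsum_add (hge.mul_right _) (hkge.mul_right _), tsum_mul_right, tsum_mul_right]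
    _ = (∑' k : ℕ, r ^ k) * ‖X - Y - M‖
        + ((∑' k : ℕ, (k:ℝ) * r ^ k) / (2 * r)) * (‖X - Y‖ * ‖M‖) := by
        ring

/-- If `E` is differentiable with `‖E(s) − Iₙ‖ ≤ r < 1` and `Ė(s)` commutes with `E(s)` for
all `s`, then `e(s) = log (E s)` is differentiable with `ė(t) = E(t)⁻¹ Ė(t)`. -/
theorem deriv_mlog_of_commute {n : ℕ} (r : ℝ) (hr0 : 0 < r) (hr1 : r < 1)
    (E E' : ℝ → Matrix (Fin n) (Fin n) ℝ)
    (hd : ∀ s : ℝ, HasDerivAt E (E' s) s)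
    (hb : ∀ s : ℝ, ‖E s - 1‖ ≤ r)
    (hc : ∀ s : ℝ, E s * E' s = E' s * E s) :
    ∀ t : ℝ, HasDerivAt (fun s => mlog (E s)) ((E t)⁻¹ * E' t) t := by
  intro t
  have hBnorm : ‖E t - 1‖ ≤ r := hb t
  have hneg : ‖-(E t - 1)‖ < 1 := by rw [norm_neg]; exact hBnorm.trans_lt hr1
  have hcommC : (E t - 1) * E' t = E' t * (E t - 1) := by
    simp only [sub_mul, mul_sub, one_mul, mul_one, hc t]
  have hsumneg : Summable (fun k : ℕ => (-(E t - 1)) ^ k) :=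
    summable_geometric_of_norm_lt_one hneg
  have h2 : ∀ k : ℕ, ((-1:ℝ)^k) • ((E t - 1) ^ k * E' t) = (-(E t - 1)) ^ k * E' t := by
    intro k
    rw [← smul_mul_assoc]
    congr 1
    rw [show -(E t - 1) = (-1 : ℝ) • (E t - 1) by simp, smul_pow]
  have hgeomB : Summable (fun k : ℕ => ((-1:ℝ)^k) • ((E t - 1) ^ k * E' t)) :=
    (summable_congr h2).mpr (hsumneg.mul_right (E' t))
  have hSC : ∀ u : ℝ, (∑' k : ℕ, ((-1:ℝ)^k) • ((E t - 1) ^ k * (u • E' t)))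
      = u • ((E t)⁻¹ * E' t) := by
    intro u
    have h1 : ∀ k : ℕ, ((-1:ℝ)^k) • ((E t - 1) ^ k * (u • E' t))
        = u • (((-1:ℝ)^k) • ((E t - 1) ^ k * E' t)) := by
      intro k
      rw [mul_smul_comm, smul_comm]
    rw [tsum_congr h1, Summable.tsum_const_smul u hgeomB]
    congr 1
    rw [tsum_congr h2, Summable.tsum_mul_right _ hsumneg, geom_series_eq_inverse _ hneg,
      sub_neg_eq_add, show (1 : Matrix (Fin n) (Fin n) ℝ) + (E t - 1) = E t by abel,
      ← Matrix.nonsing_inv_eq_ringInverse]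
  rw [hasDerivAt_iff_isLittleO]
  set c1 := ∑' k : ℕ, r ^ k with hc1def
  set c2 := ((∑' k : ℕ, (k:ℝ) * r ^ k) / (2 * r)) * ‖E' t‖ with hc2def
  have hc1 : 0 ≤ c1 := tsum_nonneg fun k => by positivity
  have hc2 : 0 ≤ c2 := by
    have : (0:ℝ) ≤ ∑' k : ℕ, (k:ℝ) * r ^ k := tsum_nonneg fun k => by positivity
    positivity
  have hmain : ∀ s : ℝ, ‖mlog (E s) - mlog (E t) - (s - t) • ((E t)⁻¹ * E' t)‖
      ≤ c1 * ‖E s - E t - (s - t) • E' t‖ + c2 * (‖E s - E t‖ * |s - t|) := by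
    intro s
    have hcommM : (E t - 1) * ((s - t) • E' t) = ((s - t) • E' t) * (E t - 1) := by
      rw [mul_smul_comm, smul_mul_assoc, hcommC]
    have hk := mlog_key hr0 hr1 (E s) (E t) ((s - t) • E' t) (hb s) (hb t) hcommM
    rw [hSC (s - t)] at hk
    refine hk.trans_eq ?_
    rw [norm_smul, Real.norm_eq_abs, hc2def]
    ring
  rw [Asymptotics.isLittleO_iff]
  intro ε hε
  have hD := hasDerivAt_iff_isLittleO.mp (hd t)
  have h1 := Asymptotics.isLittleO_iff.mp hD
    (show (0:ℝ) < ε / (2 * (c1 + 1)) by positivity)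
  have h2ev : ∀ᶠ s in nhds t, ‖E s - E t‖ ≤ ε / (2 * (c2 + 1)) := by
    have hcont : Filter.Tendsto E (nhds t) (nhds (E t)) := (hd t).continuousAt
    have htend : Filter.Tendsto (fun s => ‖E s - E t‖) (nhds t) (nhds 0) :=
      tendsto_iff_norm_sub_tendsto_zero.mp hcont
    exact htend.eventually (eventually_le_nhds (by positivity))
  filter_upwards [h1, h2ev] with s hs1 hs2
  have habs : ‖s - t‖ = |s - t| := Real.norm_eq_abs _
  have hstep : ‖mlog (E s) - mlog (E t) - (s - t) • ((E t)⁻¹ * E' t)‖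
      ≤ c1 * (ε / (2 * (c1 + 1)) * |s - t|) + c2 * (ε / (2 * (c2 + 1)) * |s - t|) := by
    refine (hmain s).trans ?_
    gcongr
    rwa [habs] at hs1
  refine hstep.trans ?_
  rw [habs]
  have e1 : c1 * (ε / (2 * (c1 + 1))) ≤ ε / 2 := by
    rw [show c1 * (ε / (2 * (c1 + 1))) = c1 * ε / (2 * (c1 + 1)) from
      (mul_div_assoc _ _ _).symm, div_le_div_iff₀ (by positivity) (by positivity)]
    nlinarith
  have e2 : c2 * (ε / (2 * (c2 + 1))) ≤ ε / 2 := by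
    rw [show c2 * (ε / (2 * (c2 + 1))) = c2 * ε / (2 * (c2 + 1)) from
      (mul_div_assoc _ _ _).symm, div_le_div_iff₀ (by positivity) (by positivity)]
    nlinarith
  nlinarith [abs_nonneg (s - t), mul_le_mul_of_nonneg_right e1 (abs_nonneg (s - t)),
    mul_le_mul_of_nonneg_right e2 (abs_nonneg (s - t))]
end

section
/- Let a₀ ∈ ℝ, let 0 < r < 1, and let E : ℝ → ℝ^{n×n} be differentiable with ‖E(s) − Iₙ‖ ≤ r for all s and satisfying the differential equation Ė(s) = −a₀ E(s) log(E(s)) for all s. Then the curve e(s) = log(E(s)) is differentiable and satisfies the linear differential equation ė(s) = −a₀ e(s) for all s. -/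
open scoped Matrix.Norms.L2Operator

section Aux

variable {n : ℕ}

lemma norm_one_le_matrix : ‖(1 : Matrix (Fin n) (Fin n) ℝ)‖ ≤ 1 := by
  rw [Matrix.cstar_norm_def, map_one, ContinuousLinearMap.one_def]
  exact ContinuousLinearMap.norm_id_le

lemma matrix_norm_pow_le (A : Matrix (Fin n) (Fin n) ℝ) {r : ℝ} (h : ‖A‖ ≤ r) (k : ℕ) :
    ‖A ^ k‖ ≤ r ^ k := by
  have hr0 : (0 : ℝ) ≤ r := le_trans (norm_nonneg _) h
  induction k with
  | zero => simpa using norm_one_le_matrix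
  | succ k ih =>
    rw [pow_succ, pow_succ]
    exact le_trans (norm_mul_le _ _)
      (mul_le_mul ih h (norm_nonneg _) (pow_nonneg hr0 _))

lemma mlog_term_norm_le {X : Matrix (Fin n) (Fin n) ℝ} {r : ℝ} (h : ‖X - 1‖ ≤ r) (k : ℕ) :
    ‖(((-1 : ℝ) ^ k / (k + 1)) • (X - 1) ^ (k + 1))‖ ≤ r * r ^ k := by
  have hr0 : (0 : ℝ) ≤ r := le_trans (norm_nonneg _) h
  have h1 : ‖(((-1 : ℝ) ^ k / (k + 1)) • (X - 1) ^ (k + 1))‖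
      = |(-1 : ℝ) ^ k / (k + 1)| * ‖(X - 1) ^ (k + 1)‖ := norm_smul _ _
  have h2 : |(-1 : ℝ) ^ k / (k + 1)| ≤ 1 := by
    rw [abs_div, abs_pow, abs_neg, abs_one, one_pow]
    rw [div_le_one (by positivity)]
    simp [abs_of_nonneg (by positivity : (0:ℝ) ≤ (k:ℝ) + 1)]
  have h3 : ‖(X - 1) ^ (k + 1)‖ ≤ r ^ (k + 1) :=
    le_trans (norm_pow_le' _ (Nat.succ_pos k)) (pow_le_pow_left₀ (norm_nonneg _) h _)
  calc ‖(((-1 : ℝ) ^ k / (k + 1)) • (X - 1) ^ (k + 1))‖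
      = |(-1 : ℝ) ^ k / (k + 1)| * ‖(X - 1) ^ (k + 1)‖ := h1
    _ ≤ 1 * r ^ (k + 1) := by
        apply mul_le_mul h2 h3 (norm_nonneg _) zero_le_one
    _ = r * r ^ k := by ring

lemma summable_mlog {X : Matrix (Fin n) (Fin n) ℝ} {r : ℝ} (hr1 : r < 1) (h : ‖X - 1‖ ≤ r) :
    Summable (fun k : ℕ => (((-1 : ℝ) ^ k / (k + 1)) • (X - 1) ^ (k + 1))) := by
  have hr0 : (0 : ℝ) ≤ r := le_trans (norm_nonneg _) h
  exact Summable.of_norm_bounded ((summable_geometric_of_lt_one hr0 hr1).mul_left r)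
    (mlog_term_norm_le h)

lemma norm_mlog_le {X : Matrix (Fin n) (Fin n) ℝ} {r : ℝ} (hr1 : r < 1) (h : ‖X - 1‖ ≤ r) :
    ‖mlog X‖ ≤ r / (1 - r) := by
  have hr0 : (0 : ℝ) ≤ r := le_trans (norm_nonneg _) h
  have hsum : Summable (fun k : ℕ => r * r ^ k) :=
    (summable_geometric_of_lt_one hr0 hr1).mul_left r
  have := tsum_of_norm_bounded hsum.hasSum (mlog_term_norm_le h)
  calc ‖mlog X‖ ≤ ∑' k : ℕ, r * r ^ k := this
    _ = r * (1 - r)⁻¹ := by rw [tsum_mul_left, tsum_geometric_of_lt_one hr0 hr1]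
    _ = r / (1 - r) := (div_eq_mul_inv r (1 - r)).symm

lemma commute_sub_one_mlog {X : Matrix (Fin n) (Fin n) ℝ} {r : ℝ} (hr1 : r < 1)
    (h : ‖X - 1‖ ≤ r) : Commute (X - 1) (mlog X) := by
  apply Commute.tsum_right
  intro k
  exact ((Commute.refl (X - 1)).pow_right (k + 1)).smul_right _

lemma commute_mlog {X : Matrix (Fin n) (Fin n) ℝ} {r : ℝ} (hr1 : r < 1)
    (h : ‖X - 1‖ ≤ r) : Commute X (mlog X) := by
  have := commute_sub_one_mlog hr1 h
  have h1 : Commute (1 : Matrix (Fin n) (Fin n) ℝ) (mlog X) := Commute.one_left _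
  simpa using this.add_left h1

/-- Derivative of the `(k+1)`-st power of a matrix curve whose derivative commutes with it. -/
lemma hasDerivAt_pow_succ {F : ℝ → Matrix (Fin n) (Fin n) ℝ} {F' : Matrix (Fin n) (Fin n) ℝ}
    {s : ℝ} (hF : HasDerivAt F F' s) (hc : Commute (F s) F') (k : ℕ) :
    HasDerivAt (fun τ => F τ ^ (k + 1)) (((k : ℝ) + 1) • (F s ^ k * F')) s := by
  induction k with
  | zero => simpa using hF
  | succ k ih =>
    have hmul := ih.mul hF
    have heq : ((fun τ => F τ ^ (k + 1)) * F) = fun τ => F τ ^ (k + 1 + 1) := by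
      funext τ; simp only [Pi.mul_apply, ← pow_succ]
    rw [heq] at hmul
    refine HasDerivAt.congr_deriv hmul ?_
    symm
    have hcomm2 : ((k : ℝ) + 1) • (F s ^ k * F') * F s
        = ((k : ℝ) + 1) • (F s ^ (k + 1) * F') := by
      rw [smul_mul_assoc, mul_assoc, ← hc.eq, ← mul_assoc, ← pow_succ]
    rw [hcomm2]
    push_cast
    rw [add_smul, one_smul]

end Aux

/-- If `E` satisfies `Ė = −a₀ E log E` while staying in the ball `‖E − Iₙ‖ ≤ r < 1`, then
`e = log E` satisfies the linear equation `ė = −a₀ e`. -/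
theorem mlog_linearizes_ode {n : ℕ} (a₀ : ℝ) (r : ℝ) (hr0 : 0 < r) (hr1 : r < 1)
    (E : ℝ → Matrix (Fin n) (Fin n) ℝ)
    (hb : ∀ s : ℝ, ‖E s - 1‖ ≤ r)
    (hode : ∀ s : ℝ, HasDerivAt E (-(a₀ • (E s * mlog (E s)))) s) :
    ∀ s : ℝ, HasDerivAt (fun τ => mlog (E τ)) (-(a₀ • mlog (E s))) s := by
  intro s
  -- notation
  set M : ℝ → Matrix (Fin n) (Fin n) ℝ := fun τ => -(a₀ • (E τ * mlog (E τ))) with hM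
  -- the derivative of `E` commutes with `E τ - 1`
  have hcomm : ∀ τ, Commute (E τ - 1) (M τ) := by
    intro τ
    have h1 : Commute (E τ - 1) (E τ) :=
      (Commute.refl (E τ)).sub_left (Commute.one_left _)
    have h2 : Commute (E τ - 1) (mlog (E τ)) := commute_sub_one_mlog hr1 (hb τ)
    exact ((h1.mul_right h2).smul_right a₀).neg_right
  -- the series of functions and their derivatives
  set f : ℕ → ℝ → Matrix (Fin n) (Fin n) ℝ :=
    fun k τ => (((-1 : ℝ) ^ k / (k + 1)) • (E τ - 1) ^ (k + 1)) with hf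
  set f' : ℕ → ℝ → Matrix (Fin n) (Fin n) ℝ :=
    fun k τ => ((-1 : ℝ) ^ k • ((E τ - 1) ^ k * M τ)) with hf'
  have hD : ∀ τ, HasDerivAt (fun σ => E σ - 1) (M τ) τ := fun τ => HasDerivAt.sub_const (1 : Matrix (Fin n) (Fin n) ℝ) (hode τ)
  have hderiv : ∀ k τ, HasDerivAt (f k) (f' k τ) τ := by
    intro k τ
    have := ((hasDerivAt_pow_succ (hD τ) (hcomm τ) k).const_smul
      ((-1 : ℝ) ^ k / ((k : ℝ) + 1)))
    refine HasDerivAt.congr_deriv this ?_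
    symm
    rw [smul_smul]
    congr 1
    field_simp
    rfl
  -- uniform bound on the derivatives
  set C : ℝ := |a₀| * ((r + ‖(1 : Matrix (Fin n) (Fin n) ℝ)‖) * (r / (1 - r))) with hC
  have hC0 : 0 ≤ C := by
    have : 0 ≤ r / (1 - r) := div_nonneg hr0.le (by linarith)
    positivity
  have hMbound : ∀ τ, ‖M τ‖ ≤ C := by
    intro τ
    have hE : ‖E τ‖ ≤ r + ‖(1 : Matrix (Fin n) (Fin n) ℝ)‖ := by
      calc ‖E τ‖ = ‖E τ - 1 + 1‖ := by rw [sub_add_cancel]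
        _ ≤ ‖E τ - 1‖ + ‖(1 : Matrix (Fin n) (Fin n) ℝ)‖ := norm_add_le _ _
        _ ≤ r + ‖(1 : Matrix (Fin n) (Fin n) ℝ)‖ := by linarith [hb τ]
    have hL : ‖mlog (E τ)‖ ≤ r / (1 - r) := norm_mlog_le hr1 (hb τ)
    calc ‖M τ‖ = |a₀| * ‖E τ * mlog (E τ)‖ := by rw [hM]; simp [norm_smul]
      _ ≤ |a₀| * (‖E τ‖ * ‖mlog (E τ)‖) :=
          mul_le_mul_of_nonneg_left (norm_mul_le _ _) (abs_nonneg _)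
      _ ≤ |a₀| * ((r + ‖(1 : Matrix (Fin n) (Fin n) ℝ)‖) * (r / (1 - r))) := by
          apply mul_le_mul_of_nonneg_left _ (abs_nonneg _)
          apply mul_le_mul hE hL (norm_nonneg _)
          positivity
  set u : ℕ → ℝ := fun k => r ^ k * C with hu
  have hu_sum : Summable u := (summable_geometric_of_lt_one hr0.le hr1).mul_right C
  have hbound : ∀ k τ, ‖f' k τ‖ ≤ u k := by
    intro k τ
    have h1 : ‖f' k τ‖ = |(-1 : ℝ) ^ k| * ‖(E τ - 1) ^ k * M τ‖ := norm_smul _ _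
    rw [h1]
    simp only [abs_pow, abs_neg, abs_one, one_pow, one_mul]
    calc ‖(E τ - 1) ^ k * M τ‖ ≤ ‖(E τ - 1) ^ k‖ * ‖M τ‖ := norm_mul_le _ _
      _ ≤ r ^ k * C := by
          apply mul_le_mul _ (hMbound τ) (norm_nonneg _) (by positivity)
          exact matrix_norm_pow_le _ (hb τ) k
  -- summability at a point
  have hf0 : Summable fun k => f k 0 := summable_mlog hr1 (hb 0)
  -- conclude differentiability of the sum
  have hmain : HasDerivAt (fun τ => ∑' k, f k τ) (∑' k, f' k s) s :=
    hasDerivAt_tsum hu_sum hderiv hbound hf0 s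
  -- identify the sum of the derivatives
  have hDs : ‖-(E s - 1)‖ < 1 := by rw [norm_neg]; exact lt_of_le_of_lt (hb s) hr1
  have hgeo : Summable fun k : ℕ => (-(E s - 1)) ^ k :=
    summable_geometric_of_norm_lt_one hDs
  have hsum_eq : (∑' k, f' k s) = -(a₀ • mlog (E s)) := by
    have step1 : ∀ k : ℕ, f' k s = (-(E s - 1)) ^ k * M s := by
      intro k
      rw [hf']
      rw [show (-(E s - 1)) = (-1 : ℝ) • (E s - 1) by simp, smul_pow, smul_mul_assoc]
    have step2 : (∑' k, f' k s) = (∑' k : ℕ, (-(E s - 1)) ^ k) * M s := by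
      rw [tsum_congr step1]
      exact hgeo.tsum_mul_right _
    have step3 : (∑' k : ℕ, (-(E s - 1)) ^ k) * E s = 1 := by
      have := geom_series_mul_neg (-(E s - 1)) hDs
      simpa using this
    rw [step2, hM]
    calc (∑' k : ℕ, (-(E s - 1)) ^ k) * -(a₀ • (E s * mlog (E s)))
        = -(a₀ • ((∑' k : ℕ, (-(E s - 1)) ^ k) * (E s * mlog (E s)))) := by
          rw [mul_neg, mul_smul_comm]
      _ = -(a₀ • (((∑' k : ℕ, (-(E s - 1)) ^ k) * E s) * mlog (E s))) := by rw [mul_assoc]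
      _ = -(a₀ • mlog (E s)) := by rw [step3, one_mul]
  rw [hsum_eq] at hmain
  have : (fun τ => ∑' k, f k τ) = fun τ => mlog (E τ) := by
    funext τ; rw [mlog]
  rwa [this] at hmain
end

section
/- Let a₀ > 0 and let E₀ ∈ ℝ^{n×n} satisfy ‖E₀ − Iₙ‖ < 1 and ‖log(E₀)‖ < log 2. Define E(t) = exp(e^{−a₀ t} log(E₀)) for t ∈ ℝ. Then E(0) = E₀, and for every t ≥ 0: ‖E(t) − Iₙ‖ < 1, log(E(t)) = e^{−a₀ t} log(E₀), and E is differentiable at t with Ė(t) = −a₀ E(t) log(E(t)). -/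
open scoped Matrix.Norms.L2Operator

set_option linter.unusedSectionVars false
set_option maxHeartbeats 1000000


open NormedSpace in
/-- Summability of the logarithm series. -/
lemma summable_logSeries {𝔸 : Type*} [NormedRing 𝔸] [NormedAlgebra ℝ 𝔸] [CompleteSpace 𝔸]
    {y : 𝔸} (h : ‖y‖ < 1) :
    Summable (fun k : ℕ => ((-1 : ℝ) ^ k / (k + 1)) • y ^ (k + 1)) := by
  apply Summable.of_norm_bounded (g := fun k : ℕ => ‖y‖ * ‖y‖ ^ k)
    ((summable_geometric_of_lt_one (norm_nonneg _) h).mul_left _)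
  intro k
  have h1 : ‖((-1 : ℝ) ^ k / (k + 1)) • y ^ (k + 1)‖ ≤ 1 * ‖y ^ (k + 1)‖ := by
    rw [norm_smul]
    gcongr
    rw [Real.norm_eq_abs, abs_div, abs_pow, abs_neg, abs_one, one_pow]
    rw [abs_of_nonneg (by positivity : (0:ℝ) ≤ (k:ℝ)+1)]
    apply div_le_one_of_le₀ (by norm_num) (by positivity)
  refine h1.trans ?_
  rw [one_mul]
  calc ‖y ^ (k+1)‖ ≤ ‖y‖ ^ (k+1) := norm_pow_le' y k.succ_pos
    _ = ‖y‖ * ‖y‖ ^ k := by rw [pow_succ, mul_comm]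


section
variable {𝔸 : Type*} [NormedRing 𝔸] [NormedAlgebra ℝ 𝔸] [CompleteSpace 𝔸]

lemma exp_sub_one_eq (A : 𝔸) :
    NormedSpace.exp A - 1 = ∑' n : ℕ, ((Nat.factorial (n+1) : ℝ))⁻¹ • A ^ (n + 1) := by
  have hs : Summable (fun n : ℕ => ((Nat.factorial n : ℝ))⁻¹ • A ^ n) :=
    NormedSpace.expSeries_summable' A
  have h0 := Summable.tsum_eq_zero_add hs
  simp only [Nat.factorial_zero, Nat.cast_one, inv_one, pow_zero, one_smul] at h0
  rw [NormedSpace.exp_eq_tsum ℝ]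
  show (∑' (n : ℕ), (↑n.factorial : ℝ)⁻¹ • A ^ n) - 1 = _
  rw [h0]
  abel

lemma norm_exp_sub_one_le (A : 𝔸) : ‖NormedSpace.exp A - 1‖ ≤ Real.exp ‖A‖ - 1 := by
  have hsr : Summable (fun n : ℕ => ((Nat.factorial (n+1) : ℝ))⁻¹ • ‖A‖ ^ (n + 1)) :=
    (summable_nat_add_iff (f := fun n : ℕ => ((Nat.factorial n : ℝ))⁻¹ • ‖A‖ ^ n) 1).2
      (NormedSpace.expSeries_summable' (𝕂 := ℝ) ‖A‖)
  have hre : Real.exp ‖A‖ - 1 = ∑' n : ℕ, ((Nat.factorial (n+1) : ℝ))⁻¹ • ‖A‖ ^ (n + 1) := by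
    have := exp_sub_one_eq (𝔸 := ℝ) ‖A‖
    rwa [← Real.exp_eq_exp_ℝ] at this
  have hle : ∀ n : ℕ, ‖((Nat.factorial (n+1) : ℝ))⁻¹ • A ^ (n+1)‖ ≤
      ((Nat.factorial (n+1) : ℝ))⁻¹ • ‖A‖ ^ (n + 1) := by
    intro n
    rw [norm_smul, Real.norm_eq_abs, abs_of_nonneg (by positivity), smul_eq_mul]
    exact mul_le_mul_of_nonneg_left (norm_pow_le' A n.succ_pos) (by positivity)
  rw [exp_sub_one_eq, hre]
  exact (norm_tsum_le_tsum_norm (hsr.of_nonneg_of_le (fun n => norm_nonneg _) hle)).trans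
    (Summable.tsum_le_tsum hle (hsr.of_nonneg_of_le (fun n => norm_nonneg _) hle) hsr)

lemma norm_exp_mul_le (A B : 𝔸) : ‖NormedSpace.exp A * B‖ ≤ Real.exp ‖A‖ * ‖B‖ := by
  have h : NormedSpace.exp A * B = (NormedSpace.exp A - 1) * B + B := by
    rw [sub_mul, one_mul, sub_add_cancel]
  rw [h]
  calc ‖(NormedSpace.exp A - 1) * B + B‖ ≤ ‖(NormedSpace.exp A - 1) * B‖ + ‖B‖ :=
        norm_add_le _ _
    _ ≤ ‖NormedSpace.exp A - 1‖ * ‖B‖ + ‖B‖ := by gcongr; exact norm_mul_le _ _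
    _ ≤ (Real.exp ‖A‖ - 1) * ‖B‖ + ‖B‖ := by gcongr; exact norm_exp_sub_one_le A
    _ = Real.exp ‖A‖ * ‖B‖ := by ring

lemma norm_pow_mul_le (y z : 𝔸) (k : ℕ) : ‖y ^ k * z‖ ≤ ‖y‖ ^ k * ‖z‖ := by
  cases k with
  | zero => simp
  | succ k =>
      calc ‖y ^ (k+1) * z‖ ≤ ‖y ^ (k+1)‖ * ‖z‖ := norm_mul_le _ _
        _ ≤ ‖y‖ ^ (k+1) * ‖z‖ :=
            mul_le_mul_of_nonneg_right (norm_pow_le' y k.succ_pos) (norm_nonneg _)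
end

section
variable {𝔹 : Type*} [NormedCommRing 𝔹] [NormedAlgebra ℝ 𝔹] [CompleteSpace 𝔹]

lemma neg_one_pow_smul_eq (k : ℕ) (y : 𝔹) : ((-1:ℝ)^k) • y = (-1:𝔹)^k * y := by
  rcases Nat.even_or_odd k with h | h
  · rw [h.neg_one_pow, h.neg_one_pow, one_smul, one_mul]
  · rw [h.neg_one_pow, h.neg_one_pow, neg_smul, one_smul, neg_mul, one_mul]

lemma pathPow {q : ℝ → 𝔹} {q' : 𝔹} {t : ℝ} (h : HasDerivAt q q' t) :
    ∀ n : ℕ, HasDerivAt (fun s => q s ^ (n+1)) (((n:ℝ)+1) • (q t ^ n * q')) t := by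
  intro n
  induction n with
  | zero => simpa using h
  | succ n ih =>
      have hmul := ih.mul h
      have : (fun s => q s ^ (n+1) * q s) = fun s => q s ^ (n+2) := by
        funext s; rw [← pow_succ]
      change HasDerivAt (fun s => q s ^ (n+1) * q s) _ t at hmul
      rw [this] at hmul
      convert hmul using 1
      push_cast
      rw [smul_mul_assoc, show q t ^ n * q' * q t = q t ^ (n+1) * q' from by ring,
        add_smul, one_smul]

lemma comm_log_exp {A : 𝔹} (hA : ‖A‖ < Real.log 2) :
    (∑' k : ℕ, ((-1:ℝ)^k / ((k:ℝ)+1)) • (NormedSpace.exp A - 1) ^ (k+1)) = A := by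
  rcases eq_or_ne A 0 with rfl | hA0
  · simp [NormedSpace.exp_zero, zero_pow]
  have hAn : 0 < ‖A‖ := norm_pos_iff.2 hA0
  have hlog2 : 1 < Real.log 2 / ‖A‖ := (one_lt_div hAn).2 hA
  set r : ℝ := (1 + Real.log 2 / ‖A‖)/2 with hrdef
  have hr1 : 1 < r := by rw [hrdef]; linarith
  have hr0 : 0 < r := by linarith
  have hrA : r * ‖A‖ < Real.log 2 := by
    have hrlt : r < Real.log 2 / ‖A‖ := by rw [hrdef]; linarith
    calc r * ‖A‖ < (Real.log 2 / ‖A‖) * ‖A‖ := by gcongr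
      _ = Real.log 2 := div_mul_cancel₀ _ (ne_of_gt hAn)
  set ρ : ℝ := Real.exp (r * ‖A‖) - 1 with hρdef
  have hρ0 : 0 ≤ ρ := by
    rw [hρdef, sub_nonneg]
    exact Real.one_le_exp (by positivity)
  have hρ1 : ρ < 1 := by
    rw [hρdef, sub_lt_iff_lt_add]
    have : Real.exp (r * ‖A‖) < Real.exp (Real.log 2) := Real.exp_lt_exp.2 hrA
    rw [Real.exp_log (by norm_num : (0:ℝ) < 2)] at this
    linarith
  set s : Set ℝ := Set.Ioo (-r) r with hs
  have hs0 : (0:ℝ) ∈ s := ⟨by linarith, by linarith⟩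
  set q : ℝ → 𝔹 := fun t => NormedSpace.exp (t • A) - 1 with hqdef
  have hqb : ∀ t ∈ s, ‖q t‖ ≤ ρ := by
    intro t ht
    refine (norm_exp_sub_one_le _).trans ?_
    rw [hρdef]
    have habs : |t| ≤ r := le_of_lt (abs_lt.2 ⟨ht.1, ht.2⟩)
    have : ‖t • A‖ ≤ r * ‖A‖ := by
      rw [norm_smul, Real.norm_eq_abs]
      gcongr
    gcongr
  have hq' : ∀ t : ℝ, HasDerivAt q (NormedSpace.exp (t • A) * A) t := by
    intro t
    exact (hasDerivAt_exp_smul_const (𝕂 := ℝ) A t).sub_const 1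
  set C : ℝ := Real.exp (r * ‖A‖) * ‖A‖ with hCdef
  have hzb : ∀ t ∈ s, ‖NormedSpace.exp (t • A) * A‖ ≤ C := by
    intro t ht
    refine (norm_exp_mul_le _ _).trans ?_
    rw [hCdef]
    have habs : |t| ≤ r := le_of_lt (abs_lt.2 ⟨ht.1, ht.2⟩)
    have h1 : ‖t • A‖ ≤ r * ‖A‖ := by
      rw [norm_smul, Real.norm_eq_abs]
      gcongr
    gcongr
  set Ψ : ℝ → 𝔹 := fun t => ∑' k : ℕ, ((-1:ℝ)^k / ((k:ℝ)+1)) • (q t) ^ (k+1) with hΨdef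
  have main : ∀ t ∈ s, HasDerivAt Ψ A t := by
    intro t ht
    have hmain : HasDerivAt Ψ
        (∑' k : ℕ, (-(q t))^k * (NormedSpace.exp (t • A) * A)) t := by
      apply hasDerivAt_tsum_of_isPreconnected
        (u := fun k : ℕ => C * ρ ^ k)
        (g' := fun (k : ℕ) (τ : ℝ) => (-(q τ))^k * (NormedSpace.exp (τ • A) * A))
        ((summable_geometric_of_lt_one hρ0 hρ1).mul_left _)
        isOpen_Ioo (convex_Ioo _ _).isPreconnected ?_ ?_ hs0 ?_ ht
      · intro k x hx
        have h1 := (pathPow (hq' x) k).const_smul ((-1:ℝ)^k / ((k:ℝ)+1))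
        change HasDerivAt (fun s => ((-1:ℝ)^k / ((k:ℝ)+1)) • q s ^ (k+1)) _ x at h1
        refine h1.congr_deriv ?_
        rw [smul_smul]
        have hk : ((k:ℝ) + 1) ≠ 0 := by positivity
        have hc : (-1:ℝ)^k / ((k:ℝ)+1) * (((k:ℝ))+1) = (-1:ℝ)^k := by field_simp
        rw [hc, neg_one_pow_smul_eq k (q x ^ k * (NormedSpace.exp (x • A) * A)),
          ← mul_assoc, ← neg_pow]
      · intro k x hx
        calc ‖(-(q x))^k * (NormedSpace.exp (x • A) * A)‖
            ≤ ‖-(q x)‖^k * ‖NormedSpace.exp (x • A) * A‖ := norm_pow_mul_le _ _ _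
          _ ≤ ρ^k * C := by
              rw [norm_neg]
              apply mul_le_mul (pow_le_pow_left₀ (norm_nonneg _) (hqb x hx) k)
                (hzb x hx) (norm_nonneg _) (by positivity)
          _ = C * ρ^k := by ring
      · apply summable_zero.congr
        intro k
        have hq0 : q 0 = 0 := by rw [hqdef]; simp [NormedSpace.exp_zero]
        simp [hq0, zero_pow]
    have heq : (∑' k : ℕ, (-(q t))^k * (NormedSpace.exp (t • A) * A)) = A := by
      have hnorm : ‖-(q t)‖ < 1 := by
        rw [norm_neg]
        exact lt_of_le_of_lt (hqb t ht) hρ1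
      have hgeo : Summable (fun k : ℕ => (-(q t))^k) :=
        summable_geometric_of_norm_lt_one hnorm
      have hone : (∑' k : ℕ, (-(q t))^k) * NormedSpace.exp (t • A) = 1 := by
        have hneg : -(q t) = 1 - NormedSpace.exp (t • A) := by rw [hqdef]; simp
        have h3 := geom_series_mul_neg (-(q t)) hnorm
        rw [hneg, sub_sub_cancel] at h3
        rw [hneg]
        exact h3
      rw [hgeo.tsum_mul_right, ← mul_assoc, hone, one_mul]
    rwa [heq] at hmain
  set G : ℝ → 𝔹 := fun t => Ψ t - t • A with hGdef
  have hG : ∀ t ∈ s, HasDerivAt G 0 t := by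
    intro t ht
    have h2 : HasDerivAt (fun τ : ℝ => τ • A) A t := by
      simpa using (hasDerivAt_id t).smul_const A
    exact ((main t ht).sub h2).congr_deriv (sub_self A)
  have hsub : Set.Icc (0:ℝ) 1 ⊆ s := fun x hx =>
    ⟨by have := hx.1; linarith, lt_of_le_of_lt hx.2 hr1⟩
  have hG10 : G 1 = G 0 := by
    have hconst := constant_of_has_deriv_right_zero (f := G) (a := (0:ℝ)) (b := 1)
      (fun x hx => (hG x (hsub hx)).continuousAt.continuousWithinAt)
      (fun x hx => (hG x (hsub ⟨hx.1, le_of_lt hx.2⟩)).hasDerivWithinAt)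
    exact hconst 1 (by norm_num)
  have hq0 : q 0 = 0 := by rw [hqdef]; simp [NormedSpace.exp_zero]
  have hG0 : G 0 = 0 := by
    rw [hGdef]
    simp only [zero_smul, sub_zero]
    rw [hΨdef]
    simp [hq0, zero_pow]
  have hq1 : q 1 = NormedSpace.exp A - 1 := by rw [hqdef]; simp
  have hG1 : G 1 = (∑' k : ℕ, ((-1:ℝ)^k / ((k:ℝ)+1)) • (NormedSpace.exp A - 1) ^ (k+1)) - A := by
    rw [hGdef, hΨdef]
    simp [hq1]
  rw [hG0, hG1] at hG10
  rw [sub_eq_zero] at hG10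
  exact hG10
end



section
variable {𝔹 : Type*} [NormedCommRing 𝔹] [NormedAlgebra ℝ 𝔹] [CompleteSpace 𝔹]

lemma comm_exp_log {u : 𝔹} (hu : ‖u‖ < 1) :
    NormedSpace.exp (∑' k : ℕ, ((-1 : ℝ) ^ k / ((k:ℝ) + 1)) • u ^ (k + 1)) = 1 + u := by
  rcases eq_or_ne u 0 with rfl | hu0
  · simp [zero_pow (Nat.succ_ne_zero _), NormedSpace.exp_zero]
  have hun : 0 < ‖u‖ := norm_pos_iff.2 hu0
  have hinv : 1 < ‖u‖⁻¹ := (one_lt_inv₀ hun).2 hu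
  set r : ℝ := (1 + ‖u‖⁻¹) / 2 with hr
  have hr1 : 1 < r := by rw [hr]; linarith
  have hr0 : 0 < r := by linarith
  have hru : r * ‖u‖ < 1 := by
    have hrlt : r < ‖u‖⁻¹ := by rw [hr]; linarith
    calc r * ‖u‖ < ‖u‖⁻¹ * ‖u‖ := by gcongr
      _ = 1 := inv_mul_cancel₀ (ne_of_gt hun)
  set s : Set ℝ := Set.Ioo (-r) r with hs
  have hs0 : (0:ℝ) ∈ s := ⟨by linarith, by linarith⟩
  set ℓ : ℝ → 𝔹 := fun t => ∑' k : ℕ, (((-1 : ℝ) ^ k / ((k:ℝ) + 1)) * t ^ (k+1)) • u ^ (k + 1)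
    with hℓdef
  set S : ℝ → 𝔹 := fun t => ∑' k : ℕ, (-(t • u)) ^ k with hSdef
  have hℓ : ∀ t ∈ s, HasDerivAt ℓ (S t * u) t := by
    intro t ht
    have main : HasDerivAt ℓ (∑' k : ℕ, ((-t) ^ k) • u ^ (k+1)) t := by
      apply hasDerivAt_tsum_of_isPreconnected
        (u := fun k : ℕ => ‖u‖ * (r * ‖u‖) ^ k)
        (g' := fun (k : ℕ) (t : ℝ) => ((-t) ^ k) • u ^ (k+1))
        ((summable_geometric_of_lt_one (by positivity) hru).mul_left _)
        isOpen_Ioo (convex_Ioo _ _).isPreconnected ?_ ?_ hs0 ?_ ht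
      · intro k x hx
        have h1 := ((hasDerivAt_pow (k+1) x).const_mul ((-1:ℝ)^k/((k:ℝ)+1))).smul_const
          (u ^ (k+1))
        convert h1 using 2
        have hk : ((k:ℝ) + 1) ≠ 0 := by positivity
        rw [neg_pow]
        push_cast
        field_simp
      · intro k x hx
        rw [norm_smul, Real.norm_eq_abs, abs_pow, abs_neg]
        have hxr : |x| ≤ r := le_of_lt (abs_lt.2 ⟨hx.1, hx.2⟩)
        calc |x| ^ k * ‖u ^ (k+1)‖ ≤ r ^ k * (‖u‖ * ‖u‖ ^ k) := by
              apply mul_le_mul (pow_le_pow_left₀ (abs_nonneg _) hxr k)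
              · rw [← pow_succ']
                exact norm_pow_le' u k.succ_pos
              · exact norm_nonneg _
              · positivity
          _ = ‖u‖ * (r * ‖u‖) ^ k := by rw [mul_pow]; ring
      · exact summable_zero.congr (fun k => by simp [zero_pow])
    have heq : (∑' k : ℕ, ((-t) ^ k) • u ^ (k+1)) = S t * u := by
      have hgeo : Summable (fun k : ℕ => (-(t • u)) ^ k) := by
        apply summable_geometric_of_norm_lt_one
        rw [norm_neg, norm_smul, Real.norm_eq_abs]
        have : |t| < r := abs_lt.2 ⟨ht.1, ht.2⟩
        calc |t| * ‖u‖ ≤ r * ‖u‖ := by gcongr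
          _ < 1 := hru
      rw [hSdef, ← hgeo.tsum_mul_right]
      apply tsum_congr
      intro k
      rw [← neg_smul, smul_pow, smul_mul_assoc, ← pow_succ]
    rwa [heq] at main
  set F : ℝ → 𝔹 := fun t => NormedSpace.exp (-(ℓ t)) * (1 + t • u) with hFdef
  have hF : ∀ t ∈ s, HasDerivAt F 0 t := by
    intro t ht
    have h1 : HasDerivAt (fun τ => NormedSpace.exp (-(ℓ τ)))
        (NormedSpace.exp (-(ℓ t)) * -(S t * u)) t := by
      have hcomp := (hasFDerivAt_exp (𝕂 := ℝ) (x := -(ℓ t))).comp_hasDerivAt t (hℓ t ht).neg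
      exact hcomp.congr_deriv (by simp)
    have h2 : HasDerivAt (fun τ : ℝ => 1 + τ • u) u t := by
      simpa using ((hasDerivAt_id t).smul_const u).const_add (1 : 𝔹)
    have h3 := h1.mul h2
    have hSval : S t * (1 + t • u) = 1 := by
      have hnorm : ‖-(t • u)‖ < 1 := by
        rw [norm_neg, norm_smul, Real.norm_eq_abs]
        have : |t| < r := abs_lt.2 ⟨ht.1, ht.2⟩
        calc |t| * ‖u‖ ≤ r * ‖u‖ := by gcongr
          _ < 1 := hru
      have := geom_series_mul_neg (-(t • u)) hnorm
      simpa [sub_neg_eq_add] using this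
    have hzero : NormedSpace.exp (-(ℓ t)) * -(S t * u) * (1 + t • u) +
        NormedSpace.exp (-(ℓ t)) * u = 0 := by
      have expand : NormedSpace.exp (-(ℓ t)) * -(S t * u) * (1 + t • u) +
          NormedSpace.exp (-(ℓ t)) * u =
          NormedSpace.exp (-(ℓ t)) * u - NormedSpace.exp (-(ℓ t)) * ((S t * (1 + t • u)) * u) := by
        ring
      rw [expand, hSval, one_mul, sub_self]
    rw [← hzero]
    exact h3
  have hsub : Set.Icc (0:ℝ) 1 ⊆ s := fun x hx =>
    ⟨by have := hx.1; linarith, lt_of_le_of_lt hx.2 hr1⟩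
  have hF10 : F 1 = F 0 := by
    have hconst := constant_of_has_deriv_right_zero (f := F) (a := (0:ℝ)) (b := 1)
      (fun x hx => (hF x (hsub hx)).continuousAt.continuousWithinAt)
      (fun x hx => (hF x (hsub ⟨hx.1, le_of_lt hx.2⟩)).hasDerivWithinAt)
    exact hconst 1 (by norm_num)
  have hℓ0 : ℓ 0 = 0 := by
    rw [hℓdef]
    simp [zero_pow]
  have hℓ1 : ℓ 1 = ∑' k : ℕ, ((-1 : ℝ) ^ k / ((k:ℝ) + 1)) • u ^ (k + 1) := by
    rw [hℓdef]
    simp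
  have hF0 : F 0 = 1 := by
    rw [hFdef]
    simp [hℓ0, NormedSpace.exp_zero]
  set L : 𝔹 := ∑' k : ℕ, ((-1 : ℝ) ^ k / ((k:ℝ) + 1)) • u ^ (k + 1) with hL
  have hF1 : NormedSpace.exp (-L) * (1 + u) = 1 := by
    have : F 1 = NormedSpace.exp (-L) * (1 + u) := by
      rw [hFdef]
      simp [hℓ1]
    rw [← this, hF10, hF0]
  have hinvexp : NormedSpace.exp L * NormedSpace.exp (-L) = 1 := by
    rw [← NormedSpace.exp_add_of_mem_ball (𝕂 := ℝ) (x := L) (y := -L) ((NormedSpace.expSeries_radius_eq_top ℝ 𝔹).symm ▸ edist_lt_top _ _) ((NormedSpace.expSeries_radius_eq_top ℝ 𝔹).symm ▸ edist_lt_top _ _), add_neg_cancel, NormedSpace.exp_zero]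
  calc NormedSpace.exp L = NormedSpace.exp L * (NormedSpace.exp (-L) * (1 + u)) := by
        rw [hF1, mul_one]
    _ = (NormedSpace.exp L * NormedSpace.exp (-L)) * (1 + u) := by ring
    _ = 1 + u := by rw [hinvexp, one_mul]
end


section transfer
variable {𝔸 : Type*} [NormedRing 𝔸] [NormedAlgebra ℝ 𝔸] [CompleteSpace 𝔸]

lemma adjoin_closure_comm (u : 𝔸) (a b : (Algebra.adjoin ℝ ({u} : Set 𝔸)).topologicalClosure) :
    a * b = b * a := by
  have step1 : ∀ x ∈ ((Algebra.adjoin ℝ ({u} : Set 𝔸)) : Set 𝔸),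
      ∀ y ∈ ((Algebra.adjoin ℝ ({u} : Set 𝔸)) : Set 𝔸), x * y = y * x := by
    intro x hx y hy
    rw [Algebra.adjoin_singleton_eq_range_aeval] at hx hy
    obtain ⟨p, rfl⟩ := hx
    obtain ⟨q, rfl⟩ := hy
    rw [← map_mul, ← map_mul, mul_comm]
  have step2 : ∀ x ∈ ((Algebra.adjoin ℝ ({u} : Set 𝔸)) : Set 𝔸), ∀ b ∈ closure ((Algebra.adjoin ℝ ({u} : Set 𝔸)) : Set 𝔸), x * b = b * x := by
    intro x hx b hb
    have hsub : closure ((Algebra.adjoin ℝ ({u} : Set 𝔸)) : Set 𝔸) ⊆ {y | x * y = y * x} :=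
      closure_minimal (fun y hy => step1 x hx y hy)
        (isClosed_eq (continuous_mul_left x) (continuous_mul_right x))
    exact hsub hb
  have step3 : ∀ a ∈ closure ((Algebra.adjoin ℝ ({u} : Set 𝔸)) : Set 𝔸), ∀ b ∈ closure ((Algebra.adjoin ℝ ({u} : Set 𝔸)) : Set 𝔸), a * b = b * a := by
    intro a ha b hb
    have hsub : closure ((Algebra.adjoin ℝ ({u} : Set 𝔸)) : Set 𝔸) ⊆ {y | y * b = b * y} :=
      closure_minimal (fun y hy => step2 y hy b hb)
        (isClosed_eq (continuous_mul_right b) (continuous_mul_left b))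
    exact hsub ha
  have ha' : (a : 𝔸) ∈ closure ((Algebra.adjoin ℝ ({u} : Set 𝔸)) : Set 𝔸) := a.2
  have hb' : (b : 𝔸) ∈ closure ((Algebra.adjoin ℝ ({u} : Set 𝔸)) : Set 𝔸) := b.2
  apply Subtype.ext
  rw [MulMemClass.coe_mul, MulMemClass.coe_mul]
  exact step3 _ ha' _ hb'
end transfer


section transfer2
variable {𝔸 : Type*} [NormedRing 𝔸] [NormedAlgebra ℝ 𝔸] [CompleteSpace 𝔸]

lemma exp_logSeries (x : 𝔸) (h : ‖x - 1‖ < 1) :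
    NormedSpace.exp (∑' k : ℕ, ((-1:ℝ)^k / ((k:ℝ)+1)) • (x - 1)^(k+1)) = x := by
  set u : 𝔸 := x - 1 with hu
  set T := (Algebra.adjoin ℝ ({u} : Set 𝔸)).topologicalClosure with hT
  haveI : CompleteSpace T :=
    (Subalgebra.isClosed_topologicalClosure _).completeSpace_coe
  letI : NormedCommRing T :=
    { (inferInstance : NormedRing T) with mul_comm := fun a b => adjoin_closure_comm u a b }
  have humem : u ∈ T :=
    (Algebra.adjoin ℝ ({u} : Set 𝔸)).le_topologicalClosure
      (Algebra.self_mem_adjoin_singleton ℝ u)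
  set ub : T := ⟨u, humem⟩ with hub
  have hubn : ‖ub‖ < 1 := h
  have hcomm := comm_exp_log (u := ub) hubn
  have hsum : Summable (fun k : ℕ => ((-1:ℝ)^k / ((k:ℝ)+1)) • ub^(k+1)) :=
    summable_logSeries hubn
  have h2 := (hsum.hasSum.map (T.val : T →ₐ[ℝ] 𝔸) continuous_subtype_val).tsum_eq
  have hterm : ∀ k : ℕ, T.val (((-1:ℝ)^k / ((k:ℝ)+1)) • ub^(k+1))
      = ((-1:ℝ)^k / ((k:ℝ)+1)) • u^(k+1) := by
    intro k
    rw [map_smul, map_pow]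
    rfl
  have htsum : T.val (∑' k : ℕ, ((-1:ℝ)^k / ((k:ℝ)+1)) • ub^(k+1))
      = ∑' k : ℕ, ((-1:ℝ)^k / ((k:ℝ)+1)) • u^(k+1) := by
    rw [← h2]
    exact tsum_congr fun k => hterm k
  have hfinal := NormedSpace.map_exp_of_mem_ball (𝕂 := ℝ) (T.val : T →ₐ[ℝ] 𝔸) continuous_subtype_val
      (∑' k : ℕ, ((-1:ℝ)^k / ((k:ℝ)+1)) • ub^(k+1)) ((NormedSpace.expSeries_radius_eq_top ℝ T).symm ▸ edist_lt_top _ _)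
  rw [hcomm, htsum] at hfinal
  rw [← hfinal, map_add, map_one]
  show (1 : 𝔸) + u = x
  rw [hu]
  abel

lemma logSeries_exp (A : 𝔸) (h : ‖A‖ < Real.log 2) :
    (∑' k : ℕ, ((-1:ℝ)^k / ((k:ℝ)+1)) • (NormedSpace.exp A - 1)^(k+1)) = A := by
  set T := (Algebra.adjoin ℝ ({A} : Set 𝔸)).topologicalClosure with hT
  haveI : CompleteSpace T :=
    (Subalgebra.isClosed_topologicalClosure _).completeSpace_coe
  letI : NormedCommRing T :=
    { (inferInstance : NormedRing T) with mul_comm := fun a b => adjoin_closure_comm A a b }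
  have hmem : A ∈ T :=
    (Algebra.adjoin ℝ ({A} : Set 𝔸)).le_topologicalClosure
      (Algebra.self_mem_adjoin_singleton ℝ A)
  set Ab : T := ⟨A, hmem⟩ with hAb
  have hAbn : ‖Ab‖ < Real.log 2 := h
  have hcomm := comm_log_exp (A := Ab) hAbn
  have hexpv : T.val (NormedSpace.exp Ab) = NormedSpace.exp A :=
    NormedSpace.map_exp_of_mem_ball (𝕂 := ℝ) (T.val : T →ₐ[ℝ] 𝔸) continuous_subtype_val Ab ((NormedSpace.expSeries_radius_eq_top ℝ T).symm ▸ edist_lt_top _ _)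
  have hlt1 : ‖NormedSpace.exp Ab - 1‖ < 1 := by
    refine lt_of_le_of_lt (norm_exp_sub_one_le Ab) ?_
    have h2 : Real.exp ‖Ab‖ < Real.exp (Real.log 2) := Real.exp_lt_exp.2 hAbn
    rw [Real.exp_log (by norm_num : (0:ℝ) < 2)] at h2
    linarith
  have hsum : Summable (fun k : ℕ => ((-1:ℝ)^k / ((k:ℝ)+1)) • (NormedSpace.exp Ab - 1)^(k+1)) :=
    summable_logSeries hlt1
  have h2 := (hsum.hasSum.map (T.val : T →ₐ[ℝ] 𝔸) continuous_subtype_val).tsum_eq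
  have hterm : ∀ k : ℕ, T.val (((-1:ℝ)^k / ((k:ℝ)+1)) • (NormedSpace.exp Ab - 1)^(k+1))
      = ((-1:ℝ)^k / ((k:ℝ)+1)) • (NormedSpace.exp A - 1)^(k+1) := by
    intro k
    rw [map_smul, map_pow, map_sub, map_one, hexpv]
  have htsum : T.val (∑' k : ℕ, ((-1:ℝ)^k / ((k:ℝ)+1)) • (NormedSpace.exp Ab - 1)^(k+1))
      = ∑' k : ℕ, ((-1:ℝ)^k / ((k:ℝ)+1)) • (NormedSpace.exp A - 1)^(k+1) := by
    rw [← h2]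
    exact tsum_congr fun k => hterm k
  rw [← htsum, hcomm]
  rfl

end transfer2

/-- For `a₀ > 0` and `E₀` with `‖E₀ − Iₙ‖ < 1`, `‖log E₀‖ < log 2`, the curve
`E(t) = exp(e^{−a₀ t} log E₀)` satisfies `E(0) = E₀` and, for all `t ≥ 0`:
`‖E(t) − Iₙ‖ < 1`, `log (E t) = e^{−a₀ t} log E₀`, and `Ḓ(t) = −a₀ E(t) log (E t)`. -/
theorem flow_solves_log_ode {n : ℕ} (a₀ : ℝ) (ha : 0 < a₀)
    (E₀ : Matrix (Fin n) (Fin n) ℝ)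
    (h1 : ‖E₀ - 1‖ < 1) (h2 : ‖mlog E₀‖ < Real.log 2)
    (E : ℝ → Matrix (Fin n) (Fin n) ℝ)
    (hE : ∀ t : ℝ, E t = NormedSpace.exp (Real.exp (-a₀ * t) • mlog E₀)) :
    E 0 = E₀ ∧
      ∀ t : ℝ, 0 ≤ t →
        ‖E t - 1‖ < 1 ∧
        mlog (E t) = Real.exp (-a₀ * t) • mlog E₀ ∧
        HasDerivAt E (-(a₀ • (E t * mlog (E t)))) t := by
  have hmlog : ∀ X : Matrix (Fin n) (Fin n) ℝ,
      mlog X = ∑' k : ℕ, ((-1:ℝ)^k / ((k:ℝ)+1)) • (X - 1)^(k+1) := fun X => rfl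
  set L := mlog E₀ with hL
  constructor
  · rw [hE 0]
    rw [mul_zero, Real.exp_zero, one_smul, hL, hmlog E₀]
    exact exp_logSeries E₀ h1
  intro t ht
  set c : ℝ := Real.exp (-a₀ * t) with hc
  have hc0 : 0 < c := Real.exp_pos _
  have hc1 : c ≤ 1 := by
    rw [hc]
    apply Real.exp_le_one_iff.2
    nlinarith
  have hnorm : ‖c • L‖ < Real.log 2 := by
    rw [norm_smul, Real.norm_eq_abs, abs_of_pos hc0]
    calc c * ‖L‖ ≤ 1 * ‖L‖ := by gcongr
      _ = ‖L‖ := one_mul _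
      _ < Real.log 2 := h2
  have hiii : mlog (E t) = c • L := by
    rw [hE t, hmlog]
    exact logSeries_exp (c • L) hnorm
  refine ⟨?_, hiii, ?_⟩
  · rw [hE t]
    refine lt_of_le_of_lt (norm_exp_sub_one_le _) ?_
    have h3 : Real.exp ‖c • L‖ < Real.exp (Real.log 2) := Real.exp_lt_exp.2 hnorm
    rw [Real.exp_log (by norm_num : (0:ℝ) < 2)] at h3
    linarith
  · have hEfun : E = fun τ : ℝ => NormedSpace.exp (Real.exp (-a₀ * τ) • L) := funext hE
    have hinner : HasDerivAt (fun τ : ℝ => Real.exp (-a₀ * τ)) (c * -a₀) t := by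
      have hlin : HasDerivAt (fun τ : ℝ => -a₀ * τ) (-a₀) t := by
        simpa using (hasDerivAt_id t).const_mul (-a₀)
      exact (Real.hasDerivAt_exp (-a₀ * t)).comp t hlin
    have houter := hasDerivAt_exp_smul_const (𝕂 := ℝ) L c
    have hgoal : HasDerivAt E ((c * -a₀) • (NormedSpace.exp (c • L) * L)) t := by
      rw [hEfun]
      exact HasDerivAt.scomp t houter hinner
    convert hgoal using 1
    rw [hiii, hE t]
    rw [mul_smul_comm, smul_smul, ← neg_smul]
    congr 1
    ring
end

section
/- Let a₀ ∈ ℝ, let u : ℝ → ℝ^{n×n}, and let X, X̂ : ℝ → ℝ^{n×n} be differentiable with X(t) invertible for all t. Suppose that at time t: Ẋ(t) = X(t) u(t); X̂ satisfies the passive observer equation Ẋ̂(t) = X̂(t) u(t) − a₀ X̂(t) log(X(t)⁻¹ X̂(t)); and both ‖X(t)⁻¹ X̂(t) − Iₙ‖ < 1 and ‖X̂(t) X(t)⁻¹ − Iₙ‖ < 1. Then the right-invariant error E_r(s) = X̂(s) X(s)⁻¹ is differentiable at t with Ė_r(t) = −a₀ E_r(t) log(E_r(t)). -/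
open scoped Matrix.Norms.L2Operator

lemma swap_pow {n : ℕ} (A B : Matrix (Fin n) (Fin n) ℝ) (m : ℕ) :
    A * (B * A - 1) ^ m = (A * B - 1) ^ m * A := by
  induction m with
  | zero => simp
  | succ m ih =>
    rw [pow_succ, ← mul_assoc, ih]
    noncomm_ring

lemma mlog_summable {n : ℕ} (E : Matrix (Fin n) (Fin n) ℝ) (h : ‖E - 1‖ < 1) :
    Summable (fun k : ℕ => ((-1 : ℝ) ^ k / (k + 1)) • (E - 1) ^ (k + 1)) := by
  apply Summable.of_norm
  apply Summable.of_nonneg_of_le (fun k => norm_nonneg _) (fun k => ?_)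
    (summable_geometric_of_lt_one (norm_nonneg _) h)
  rw [norm_smul]
  calc ‖(-1 : ℝ) ^ k / (k + 1)‖ * ‖(E - 1) ^ (k + 1)‖
      ≤ 1 * ‖E - 1‖ ^ (k + 1) := by
        apply mul_le_mul _ (norm_pow_le' _ (Nat.succ_pos k)) (norm_nonneg _) zero_le_one
        rw [norm_div, norm_pow, norm_neg, norm_one, one_pow]
        have h1 : (1 : ℝ) ≤ ‖(k : ℝ) + 1‖ := by
          rw [Real.norm_eq_abs, abs_of_nonneg (by positivity)]
          linarith [Nat.cast_nonneg (α := ℝ) k]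
        exact (div_le_one (by linarith)).mpr h1
    _ ≤ ‖E - 1‖ ^ k := by
        rw [one_mul, pow_succ]
        exact mul_le_of_le_one_right (by positivity) h.le

lemma mul_mlog {n : ℕ} (A B : Matrix (Fin n) (Fin n) ℝ)
    (h1 : ‖B * A - 1‖ < 1) (h2 : ‖A * B - 1‖ < 1) :
    A * mlog (B * A) = mlog (A * B) * A := by
  unfold mlog
  rw [← (mlog_summable _ h1).tsum_mul_left A, ← (mlog_summable _ h2).tsum_mul_right A]
  congr 1
  funext k
  rw [mul_smul_comm, smul_mul_assoc, swap_pow]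

/-- Passive observer: if at time `t` the plant satisfies `Ẋ = X u` and the observer satisfies
`Ẋ̂ = X̂ u − a₀ X̂ log(X⁻¹ X̂)`, with both invariant errors in the unit ball around `Iₙ`, then
the right-invariant error `E_r = X̂ X⁻¹` satisfies `Ė_r = −a₀ E_r log E_r` at `t`. -/
theorem passive_observer_right_error {n : ℕ} (a₀ : ℝ)
    (u X Xhat X' Xhat' : ℝ → Matrix (Fin n) (Fin n) ℝ)
    (hXd : ∀ s : ℝ, HasDerivAt X (X' s) s)
    (hXhd : ∀ s : ℝ, HasDerivAt Xhat (Xhat' s) s)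
    (hinv : ∀ s : ℝ, IsUnit (X s))
    (t : ℝ)
    (hplant : X' t = X t * u t)
    (hobs : Xhat' t = Xhat t * u t - a₀ • (Xhat t * mlog ((X t)⁻¹ * Xhat t)))
    (hEl : ‖(X t)⁻¹ * Xhat t - 1‖ < 1)
    (hEr : ‖Xhat t * (X t)⁻¹ - 1‖ < 1) :
    HasDerivAt (fun s => Xhat s * (X s)⁻¹)
      (-(a₀ • ((Xhat t * (X t)⁻¹) * mlog (Xhat t * (X t)⁻¹)))) t := by
  obtain ⟨x, hx⟩ := hinv t
  have hIdInv : HasDerivAt (fun s => (X s)⁻¹)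
      (-((X t)⁻¹ * X' t * (X t)⁻¹)) t := by
    have hf : HasFDerivAt Ring.inverse
        (-(ContinuousLinearMap.mulLeftRight ℝ (Matrix (Fin n) (Fin n) ℝ)) ↑x⁻¹ ↑x⁻¹) (X t) :=
      hx ▸ hasFDerivAt_ringInverse (𝕜 := ℝ) x
    have h := hf.comp_hasDerivAt t (hXd t)
    simp only [ContinuousLinearMap.neg_apply, ContinuousLinearMap.mulLeftRight_apply] at h
    have heq : (fun s => (X s)⁻¹) = fun s => Ring.inverse (X s) := by
      funext s; exact Matrix.nonsing_inv_eq_ringInverse _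
    rw [heq]
    have h2 : -((X t)⁻¹ * X' t * (X t)⁻¹) = -((↑x⁻¹ : Matrix (Fin n) (Fin n) ℝ) * X' t * (↑x⁻¹ : Matrix (Fin n) (Fin n) ℝ)) := by
      rw [Matrix.nonsing_inv_eq_ringInverse, ← hx, Ring.inverse_unit]
    rw [h2]; exact h
  have hmain := (hXhd t).mul hIdInv
  refine hmain.congr_deriv (Eq.symm ?_)
  have hXinv : (X t)⁻¹ * X t = 1 :=
    Matrix.nonsing_inv_mul _ (Matrix.isUnit_iff_isUnit_det _ |>.mp (hinv t))
  rw [hobs, hplant]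
  have hswap : Xhat t * mlog ((X t)⁻¹ * Xhat t) = mlog (Xhat t * (X t)⁻¹) * Xhat t :=
    mul_mlog _ _ hEl hEr
  have hcomm : (Xhat t * (X t)⁻¹) * mlog (Xhat t * (X t)⁻¹)
      = mlog (Xhat t * (X t)⁻¹) * (Xhat t * (X t)⁻¹) := by
    have := mul_mlog (Xhat t * (X t)⁻¹) 1 (by simpa using hEr) (by simpa using hEr)
    simpa using this
  rw [hcomm, sub_mul, smul_mul_assoc, hswap]
  simp only [mul_assoc]
  rw [← mul_assoc ((X t)⁻¹), hXinv, one_mul]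
  simp only [mul_neg]
  abel
end

section
/- Let a₀ ∈ ℝ, let u : ℝ → ℝ^{n×n}, and let X, X̂ : ℝ → ℝ^{n×n} be differentiable with X(t) invertible for all t. Suppose that at time t: Ẋ(t) = X(t) u(t); X̂ satisfies the direct observer equation Ẋ̂(t) = X(t) u(t) X(t)⁻¹ X̂(t) − a₀ X̂(t) log(X(t)⁻¹ X̂(t)); and ‖X(t)⁻¹ X̂(t) − Iₙ‖ < 1. Then the left-invariant error E_l(s) = X(s)⁻¹ X̂(s) is differentiable at t with Ė_l(t) = −a₀ E_l(t) log(E_l(t)). -/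
open scoped Matrix.Norms.L2Operator

/-- Direct observer: if at time `t` the plant satisfies `Ẋ = X u` and the observer satisfies
`Ẋ̂ = X u X⁻¹ X̂ − a₀ X̂ log(X⁻¹ X̂)`, with `‖X⁻¹ X̂ − Iₙ‖ < 1`, then the left-invariant
error `E_l = X⁻¹ X̂` satisfies `Ė_l = −a₀ E_l log E_l` at `t`. -/
theorem direct_observer_left_error {n : ℕ} (a₀ : ℝ)
    (u X Xhat X' Xhat' : ℝ → Matrix (Fin n) (Fin n) ℝ)
    (hXd : ∀ s : ℝ, HasDerivAt X (X' s) s)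
    (hXhd : ∀ s : ℝ, HasDerivAt Xhat (Xhat' s) s)
    (hinv : ∀ s : ℝ, IsUnit (X s))
    (t : ℝ)
    (hplant : X' t = X t * u t)
    (hobs : Xhat' t = X t * u t * (X t)⁻¹ * Xhat t - a₀ • (Xhat t * mlog ((X t)⁻¹ * Xhat t)))
    (hEl : ‖(X t)⁻¹ * Xhat t - 1‖ < 1) :
    HasDerivAt (fun s => (X s)⁻¹ * Xhat s)
      (-(a₀ • (((X t)⁻¹ * Xhat t) * mlog ((X t)⁻¹ * Xhat t)))) t := by
  -- derivative of the inverse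
  have hIf : HasFDerivAt (fun s : ℝ => Ring.inverse (X s))
      ((-(ContinuousLinearMap.mulLeftRight ℝ _ ((X t)⁻¹) ((X t)⁻¹))).comp
        (ContinuousLinearMap.smulRight (1 : ℝ →L[ℝ] ℝ) (X' t))) t := by
    have hui : (((hinv t).unit⁻¹ : _ˣ) : Matrix (Fin n) (Fin n) ℝ) = (X t)⁻¹ := by
      rw [← Ring.inverse_unit (hinv t).unit, Matrix.nonsing_inv_eq_ringInverse]
      exact congrArg _ (hinv t).unit_spec
    have h := (hasFDerivAt_ringInverse (𝕜 := ℝ) (hinv t).unit).comp t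
      ((hXd t).hasFDerivAt)
    rw [hui] at h
    exact h
  have hI : HasDerivAt (fun s : ℝ => (X s)⁻¹)
      (-((X t)⁻¹ * X' t * (X t)⁻¹)) t := by
    have : HasDerivAt (fun s : ℝ => Ring.inverse (X s))
        (-((X t)⁻¹ * X' t * (X t)⁻¹)) t := by
      have := hIf.hasDerivAt
      simpa using this
    refine this.congr_of_eventuallyEq ?_
    filter_upwards with s using Matrix.nonsing_inv_eq_ringInverse (X s)
  have h := hI.mul (hXhd t)
  convert h using 1
  case e'_4 => rfl
  case e'_5 => rfl
  case e'_6 => rfl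
  case e'_8 => rfl
  rw [hplant, hobs]
  have hXiX : (X t)⁻¹ * X t = 1 :=
    Matrix.nonsing_inv_mul _ ((Matrix.isUnit_iff_isUnit_det _).mp (hinv t))
  simp only [mul_sub, Matrix.mul_smul, ← mul_assoc, hXiX, one_mul, neg_mul]
  abel
end

section
/- Let a₀ ∈ ℝ, let u : ℝ → ℝ^{n×n}, and let X, X̂ : ℝ → ℝ^{n×n} be differentiable with X(t) invertible for all t. Suppose that at time t: Ẋ(t) = X(t) u(t); X̂ satisfies the passive observer equation Ẋ̂(t) = X̂(t) u(t) − a₀ X̂(t) log(X(t)⁻¹ X̂(t)); and ‖X(t)⁻¹ X̂(t) − Iₙ‖ < 1. Then the left-invariant error E_l(s) = X(s)⁻¹ X̂(s) is differentiable at t with Ė_l(t) = −a₀ E_l(t) log(E_l(t)) + (E_l(t) u(t) − u(t) E_l(t)). -/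
open scoped Matrix.Norms.L2Operator

/-- Passive observer, left-invariant error: if at time `t` the plant satisfies `Ẋ = X u` and
the observer satisfies `Ẋ̂ = X̂ u − a₀ X̂ log(X⁻¹ X̂)`, with `‖X⁻¹ X̂ − Iₙ‖ < 1`, then the
left-invariant error `E_l = X⁻¹ X̂` satisfies `Ė_l = −a₀ E_l log E_l + (E_l u − u E_l)`
at `t`. -/
theorem passive_observer_left_error {n : ℕ} (a₀ : ℝ)
    (u X Xhat X' Xhat' : ℝ → Matrix (Fin n) (Fin n) ℝ)
    (hXd : ∀ s : ℝ, HasDerivAt X (X' s) s)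
    (hXhd : ∀ s : ℝ, HasDerivAt Xhat (Xhat' s) s)
    (hinv : ∀ s : ℝ, IsUnit (X s))
    (t : ℝ)
    (hplant : X' t = X t * u t)
    (hobs : Xhat' t = Xhat t * u t - a₀ • (Xhat t * mlog ((X t)⁻¹ * Xhat t)))
    (hEl : ‖(X t)⁻¹ * Xhat t - 1‖ < 1) :
    HasDerivAt (fun s => (X s)⁻¹ * Xhat s)
      (-(a₀ • (((X t)⁻¹ * Xhat t) * mlog ((X t)⁻¹ * Xhat t))) +
        (((X t)⁻¹ * Xhat t) * u t - u t * ((X t)⁻¹ * Xhat t))) t := by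
  obtain ⟨hu, hus⟩ := hinv t
  have hfd : HasFDerivAt Ring.inverse
      (-ContinuousLinearMap.mulLeftRight ℝ _ (↑hu⁻¹) (↑hu⁻¹)) (X t) := by
    exact hus ▸ hasFDerivAt_ringInverse (𝕜 := ℝ) hu
  have hinvd : HasDerivAt (fun s => (X s)⁻¹)
      (-((X t)⁻¹ * X' t * (X t)⁻¹)) t := by
    have := hfd.comp_hasDerivAt t (hXd t)
    simp only [ContinuousLinearMap.neg_apply, ContinuousLinearMap.mulLeftRight_apply] at this
    have heq : Ring.inverse ∘ X = fun s => (X s)⁻¹ := by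
      funext s; rw [Function.comp_apply, Matrix.nonsing_inv_eq_ringInverse]
    rw [heq] at this
    have hcoe : (↑hu⁻¹ : Matrix (Fin n) (Fin n) ℝ) = (X t)⁻¹ := by
      rw [Matrix.nonsing_inv_eq_ringInverse, ← hus, Ring.inverse_unit]
    rw [hcoe] at this
    exact this
  have hprod := hinvd.mul (hXhd t)
  refine hprod.congr_deriv ?_
  rw [hplant, hobs]
  have hXinvX : (X t)⁻¹ * X t = 1 := Matrix.nonsing_inv_mul _ ((Matrix.isUnit_iff_isUnit_det _).mp (hinv t))
  simp only [Matrix.mul_smul, mul_sub, ← mul_assoc, hXinvX, one_mul]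
  noncomm_ring
end

section
/- Let 0 < r < 1, let u : ℝ → ℝ^{n×n}, and let E : ℝ → ℝ^{n×n} be differentiable with ‖E(s) − Iₙ‖ ≤ r for all s and satisfying Ė(s) = E(s) u(s) − u(s) E(s) for all s. Then the curve e(s) = log(E(s)) is differentiable and satisfies ė(s) = e(s) u(s) − u(s) e(s) for all s. -/
open scoped Matrix.Norms.L2Operator

namespace MlogAux

variable {A : Type*} [NormedRing A] [NormedAlgebra ℝ A]

lemma norm_pow_mul_le (Y : A) (i : ℕ) (v : A) : ‖Y ^ i * v‖ ≤ ‖Y‖ ^ i * ‖v‖ := by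
  induction i with
  | zero => simp
  | succ i ih =>
      calc ‖Y ^ (i + 1) * v‖ = ‖Y * (Y ^ i * v)‖ := by rw [pow_succ', mul_assoc]
        _ ≤ ‖Y‖ * ‖Y ^ i * v‖ := norm_mul_le _ _
        _ ≤ ‖Y‖ * (‖Y‖ ^ i * ‖v‖) :=
            mul_le_mul_of_nonneg_left ih (norm_nonneg _)
        _ = ‖Y‖ ^ (i + 1) * ‖v‖ := by ring

lemma norm_mul_pow_le (Y : A) (j : ℕ) (v : A) : ‖v * Y ^ j‖ ≤ ‖v‖ * ‖Y‖ ^ j := by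
  induction j with
  | zero => simp
  | succ j ih =>
      calc ‖v * Y ^ (j + 1)‖ = ‖(v * Y ^ j) * Y‖ := by rw [pow_succ, mul_assoc]
        _ ≤ ‖v * Y ^ j‖ * ‖Y‖ := norm_mul_le _ _
        _ ≤ ‖v‖ * ‖Y‖ ^ j * ‖Y‖ :=
            mul_le_mul_of_nonneg_right ih (norm_nonneg _)
        _ = ‖v‖ * ‖Y‖ ^ (j + 1) := by ring

lemma norm_pow_succ_le (Y : A) (k : ℕ) : ‖Y ^ (k + 1)‖ ≤ ‖Y‖ ^ (k + 1) := by
  calc ‖Y ^ (k + 1)‖ = ‖Y ^ k * Y‖ := by rw [pow_succ]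
    _ ≤ ‖Y‖ ^ k * ‖Y‖ := norm_pow_mul_le Y k Y
    _ = ‖Y‖ ^ (k + 1) := (pow_succ _ _).symm

/-- The derivative of `Z ↦ (Z-1)^m` at `X`. -/
noncomputable def Dpow (m : ℕ) (X : A) : A →L[ℝ] A :=
  ∑ i ∈ Finset.range m,
    (ContinuousLinearMap.mul ℝ A ((X - 1) ^ i)).comp
      ((ContinuousLinearMap.mul ℝ A).flip ((X - 1) ^ (m - 1 - i)))

lemma Dpow_apply (m : ℕ) (X H : A) :
    Dpow m X H = ∑ i ∈ Finset.range m, (X - 1) ^ i * H * (X - 1) ^ (m - 1 - i) := by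
  simp [Dpow, ContinuousLinearMap.sum_apply, mul_assoc]

lemma Dpow_succ (m : ℕ) (X : A) :
    Dpow (m + 1) X =
      (X - 1) ^ m • ContinuousLinearMap.id ℝ A + (Dpow m X).smulRight (X - 1) := by
  refine ContinuousLinearMap.ext fun H => ?_
  rw [ContinuousLinearMap.add_apply, ContinuousLinearMap.smul_apply,
    ContinuousLinearMap.coe_id', id_eq, ContinuousLinearMap.smulRight_apply,
    smul_eq_mul, smul_eq_mul]
  rw [Dpow_apply, Finset.sum_range_succ, Dpow_apply, Finset.sum_mul, add_comm]
  congr 1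
  · have : m + 1 - 1 - m = 0 := by omega
    rw [this, pow_zero, mul_one]
  · apply Finset.sum_congr rfl
    intro i hi
    have hi' : i < m := Finset.mem_range.mp hi
    have : m + 1 - 1 - i = (m - 1 - i) + 1 := by omega
    rw [this, pow_succ, ← mul_assoc]

lemma hasFDerivAt_powsub (m : ℕ) (X : A) :
    HasFDerivAt (fun Z : A => (Z - 1) ^ m) (Dpow m X) X := by
  induction m with
  | zero =>
      simp only [pow_zero]
      have : Dpow 0 X = (0 : A →L[ℝ] A) := by simp [Dpow]
      rw [this]
      exact hasFDerivAt_const _ _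
  | succ m ih =>
      have h1 : HasFDerivAt (fun Z : A => Z - 1) (ContinuousLinearMap.id ℝ A) X :=
        (hasFDerivAt_id X).sub_const 1
      have h := ih.mul' h1
      have heq : ((fun Z : A => (Z - 1) ^ m) * fun Z : A => Z - 1) = fun Z : A => (Z - 1) ^ (m + 1) := by
        funext Z; simp only [Pi.mul_apply]; rw [← pow_succ]
      rw [heq] at h
      rw [Dpow_succ]
      rw [show (Dpow m X).smulRight (X - 1) = MulOpposite.op (X - 1) • Dpow m X from by
        ext H; simp]
      exact h

lemma Dpow_norm_le (m : ℕ) (X : A) (c : ℝ) (hc : 0 ≤ c) (h : ‖X - 1‖ ≤ c) :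
    ‖Dpow m X‖ ≤ m * c ^ (m - 1) := by
  rw [Dpow]
  refine le_trans (norm_sum_le _ _) ?_
  have hterm : ∀ i ∈ Finset.range m,
      ‖(ContinuousLinearMap.mul ℝ A ((X - 1) ^ i)).comp
        ((ContinuousLinearMap.mul ℝ A).flip ((X - 1) ^ (m - 1 - i)))‖ ≤ c ^ (m - 1) := by
    intro i hi
    have hi' : i < m := Finset.mem_range.mp hi
    refine ContinuousLinearMap.opNorm_le_bound _ (pow_nonneg hc _) (fun v => ?_)
    rw [ContinuousLinearMap.comp_apply, ContinuousLinearMap.flip_apply,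
      ContinuousLinearMap.mul_apply', ContinuousLinearMap.mul_apply']
    calc ‖(X - 1) ^ i * (v * (X - 1) ^ (m - 1 - i))‖
        ≤ ‖X - 1‖ ^ i * ‖v * (X - 1) ^ (m - 1 - i)‖ := norm_pow_mul_le _ _ _
      _ ≤ ‖X - 1‖ ^ i * (‖v‖ * ‖X - 1‖ ^ (m - 1 - i)) :=
          mul_le_mul_of_nonneg_left (norm_mul_pow_le _ _ _) (by positivity)
      _ ≤ c ^ i * (‖v‖ * c ^ (m - 1 - i)) := by
          apply mul_le_mul (pow_le_pow_left₀ (norm_nonneg _) h i)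
          · exact mul_le_mul_of_nonneg_left (pow_le_pow_left₀ (norm_nonneg _) h _)
              (norm_nonneg _)
          · positivity
          · positivity
      _ = c ^ (i + (m - 1 - i)) * ‖v‖ := by rw [pow_add]; ring
      _ = c ^ (m - 1) * ‖v‖ := by
          have : i + (m - 1 - i) = m - 1 := by omega
          rw [this]
  calc (∑ i ∈ Finset.range m, ‖(ContinuousLinearMap.mul ℝ A ((X - 1) ^ i)).comp
        ((ContinuousLinearMap.mul ℝ A).flip ((X - 1) ^ (m - 1 - i)))‖)
      ≤ ∑ _i ∈ Finset.range m, c ^ (m - 1) := Finset.sum_le_sum hterm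
    _ = m * c ^ (m - 1) := by simp [Finset.sum_const, nsmul_eq_mul]

lemma telescope (Y w : A) (m : ℕ) :
    ∑ i ∈ Finset.range m, Y ^ i * (Y * w - w * Y) * Y ^ (m - 1 - i) =
      Y ^ m * w - w * Y ^ m := by
  induction m with
  | zero => simp
  | succ m ih =>
      rw [Finset.sum_range_succ]
      have hlast : m + 1 - 1 - m = 0 := by omega
      rw [hlast, pow_zero, mul_one]
      have hrest : ∑ i ∈ Finset.range m, Y ^ i * (Y * w - w * Y) * Y ^ (m + 1 - 1 - i) =
          (Y ^ m * w - w * Y ^ m) * Y := by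
        rw [← ih, Finset.sum_mul]
        apply Finset.sum_congr rfl
        intro i hi
        have hi' : i < m := Finset.mem_range.mp hi
        have : m + 1 - 1 - i = (m - 1 - i) + 1 := by omega
        rw [this, pow_succ, ← mul_assoc]
      rw [hrest]
      noncomm_ring [pow_succ]

lemma Dpow_comm_apply (m : ℕ) (X w : A) :
    Dpow m X (X * w - w * X) = (X - 1) ^ m * w - w * (X - 1) ^ m := by
  have hx : X * w - w * X = (X - 1) * w - w * (X - 1) := by noncomm_ring
  rw [Dpow_apply, hx, telescope]

theorem main [CompleteSpace A] (r : ℝ) (hr0 : 0 < r) (hr1 : r < 1)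
    (u : ℝ → A) (E : ℝ → A)
    (hb : ∀ s : ℝ, ‖E s - 1‖ ≤ r)
    (hode : ∀ s : ℝ, HasDerivAt E (E s * u s - u s * E s) s) (s : ℝ) :
    HasDerivAt (fun τ => ∑' k : ℕ, (((-1 : ℝ) ^ k / (k + 1)) • (E τ - 1) ^ (k + 1)))
      ((∑' k : ℕ, (((-1 : ℝ) ^ k / (k + 1)) • (E s - 1) ^ (k + 1))) * u s -
        u s * ∑' k : ℕ, (((-1 : ℝ) ^ k / (k + 1)) • (E s - 1) ^ (k + 1))) s := by
  classical
  set r' : ℝ := (1 + r) / 2 with hr'def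
  have hrr' : r < r' := by rw [hr'def]; linarith
  have hr'0 : 0 < r' := lt_trans hr0 hrr'
  have hr'1 : r' < 1 := by rw [hr'def]; linarith
  set c : ℕ → ℝ := fun k => (-1 : ℝ) ^ k / (k + 1) with hc
  have hck : ∀ k : ℕ, |c k| ≤ 1 / (k + 1) := by
    intro k
    rw [hc]
    simp only [abs_div, abs_pow, abs_neg, abs_one, one_pow]
    rw [abs_of_pos (by positivity : (0 : ℝ) < (k : ℝ) + 1)]
  set f : ℕ → A → A := fun k X => c k • (X - 1) ^ (k + 1) with hf
  set f' : ℕ → A → (A →L[ℝ] A) := fun k X => c k • Dpow (k + 1) X with hf'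
  have hnorm_f' : ∀ (k : ℕ) (X : A), X ∈ Metric.ball (1 : A) r' → ‖f' k X‖ ≤ r' ^ k := by
    intro k X hX
    rw [Metric.mem_ball, dist_eq_norm] at hX
    have hD := Dpow_norm_le (k + 1) X r' hr'0.le hX.le
    simp only [Nat.add_sub_cancel, Nat.cast_add, Nat.cast_one] at hD
    rw [hf']
    calc ‖c k • Dpow (k + 1) X‖ ≤ ‖c k‖ * ‖Dpow (k + 1) X‖ := by exact norm_smul_le (c k) (Dpow (k + 1) X)
      _ ≤ (1 / ((k : ℝ) + 1)) * (((k : ℝ) + 1) * r' ^ k) := by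
          apply mul_le_mul ?_ hD (norm_nonneg _) (by positivity)
          rw [Real.norm_eq_abs]; exact hck k
      _ = r' ^ k := by
          field_simp
  have hsum_geom : Summable (fun k : ℕ => r' ^ k) :=
    summable_geometric_of_lt_one hr'0.le hr'1
  have hball_open : IsOpen (Metric.ball (1 : A) r') := Metric.isOpen_ball
  have hball_conn : IsPreconnected (Metric.ball (1 : A) r') :=
    (convex_ball (1 : A) r').isPreconnected
  have h1mem : (1 : A) ∈ Metric.ball (1 : A) r' := Metric.mem_ball_self hr'0
  have hf0 : Summable (fun k => f k (1 : A)) := by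
    have hz : ∀ k, f k (1 : A) = 0 := by
      intro k
      rw [hf]
      simp
    exact (summable_congr hz).mpr summable_zero
  have hEmem : E s ∈ Metric.ball (1 : A) r' := by
    rw [Metric.mem_ball, dist_eq_norm]
    exact lt_of_le_of_lt (hb s) hrr'
  have hfd : ∀ (k : ℕ) (X : A), X ∈ Metric.ball (1 : A) r' → HasFDerivAt (f k) (f' k X) X := by
    intro k X _
    exact (hasFDerivAt_powsub (k + 1) X).const_smul (c k)
  have hF : HasFDerivAt (fun X : A => ∑' k, f k X) (∑' k, f' k (E s)) (E s) :=
    hasFDerivAt_tsum_of_isPreconnected hsum_geom hball_open hball_conn hfd hnorm_f'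
      h1mem hf0 hEmem
  have hD : HasDerivAt (fun τ => ∑' k, f k (E τ))
      ((∑' k, f' k (E s)) (E s * u s - u s * E s)) s :=
    hF.comp_hasDerivAt s (hode s)
  -- now compute the value of the derivative
  have hsumf' : Summable (fun k => f' k (E s)) :=
    Summable.of_norm_bounded hsum_geom (fun k => hnorm_f' k (E s) hEmem)
  set w := u s with hw
  set Y := E s - 1 with hY
  have happly : (∑' k, f' k (E s)) (E s * w - w * E s) =
      ∑' k, (f' k (E s)) (E s * w - w * E s) :=
    (ContinuousLinearMap.apply ℝ A (E s * w - w * E s)).map_tsum hsumf'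
  have hterm : ∀ k : ℕ, (f' k (E s)) (E s * w - w * E s) =
      (c k • Y ^ (k + 1)) * w - w * (c k • Y ^ (k + 1)) := by
    intro k
    rw [hf']
    simp only [ContinuousLinearMap.smul_apply]
    rw [Dpow_comm_apply (k + 1) (E s) w, ← hY]
    rw [smul_sub, smul_mul_assoc, mul_smul_comm]
  have hsumY : Summable (fun k : ℕ => c k • Y ^ (k + 1)) := by
    apply Summable.of_norm_bounded (g := fun k : ℕ => r' ^ (k + 1))
    · simpa [pow_succ, mul_comm] using hsum_geom.mul_left r'
    · intro k
      calc ‖c k • Y ^ (k + 1)‖ ≤ ‖c k‖ * ‖Y ^ (k + 1)‖ := norm_smul_le _ _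
        _ ≤ 1 * r' ^ (k + 1) := by
            apply mul_le_mul
            · rw [Real.norm_eq_abs]
              calc |c k| ≤ 1 / ((k : ℝ) + 1) := hck k
                _ ≤ 1 := by
                    rw [div_le_one (by positivity)]
                    have := Nat.cast_nonneg (α := ℝ) k
                    linarith
            · exact le_trans (norm_pow_succ_le _ _)
                (pow_le_pow_left₀ (norm_nonneg _) ((hb s).trans hrr'.le) _)
            · exact norm_nonneg _
            · exact zero_le_one
        _ = r' ^ (k + 1) := one_mul _
  have hsumYw : Summable (fun k : ℕ => (c k • Y ^ (k + 1)) * w) :=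
    ((ContinuousLinearMap.mul ℝ A).flip w).summable hsumY
  have hsumwY : Summable (fun k : ℕ => w * (c k • Y ^ (k + 1))) :=
    (ContinuousLinearMap.mul ℝ A w).summable hsumY
  have hval : (∑' k, f' k (E s)) (E s * w - w * E s) =
      (∑' k, f k (E s)) * w - w * ∑' k, f k (E s) := by
    rw [happly]
    calc (∑' k, (f' k (E s)) (E s * w - w * E s))
        = ∑' k, ((c k • Y ^ (k + 1)) * w - w * (c k • Y ^ (k + 1))) := tsum_congr hterm
      _ = (∑' k, (c k • Y ^ (k + 1)) * w) - ∑' k, w * (c k • Y ^ (k + 1)) :=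
          Summable.tsum_sub hsumYw hsumwY
      _ = (∑' k, c k • Y ^ (k + 1)) * w - w * ∑' k, c k • Y ^ (k + 1) := by
          rw [hsumY.tsum_mul_right w, hsumY.tsum_mul_left w]
  rw [hval] at hD
  exact hD

end MlogAux

/-- If `E` satisfies the commutator equation `Ė = E u − u E` while staying in the ball
`‖E − Iₙ‖ ≤ r < 1`, then `e = log E` satisfies `ė = e u − u e`. -/
theorem mlog_commutator_ode {n : ℕ} (r : ℝ) (hr0 : 0 < r) (hr1 : r < 1)
    (u : ℝ → Matrix (Fin n) (Fin n) ℝ)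
    (E : ℝ → Matrix (Fin n) (Fin n) ℝ)
    (hb : ∀ s : ℝ, ‖E s - 1‖ ≤ r)
    (hode : ∀ s : ℝ, HasDerivAt E (E s * u s - u s * E s) s) :
    ∀ s : ℝ, HasDerivAt (fun τ => mlog (E τ))
      (mlog (E s) * u s - u s * mlog (E s)) s := by
  intro s
  have h := MlogAux.main r hr0 hr1 u E hb hode s
  simpa only [mlog] using h
end

section
/- Let a₀, a₁ ∈ ℝ, let u : ℝ → ℝ^{n×n}, and let X, x₂, X̂, x̂₂ : ℝ → ℝ^{n×n} be differentiable with X(t) invertible and ‖X(t)⁻¹ X̂(t) − Iₙ‖ < 1 for all t. Suppose that at time t the plant satisfies Ẋ(t) = X(t) x₂(t) and ẋ₂(t) = u(t), and the direct partial-state observer (with output Y = X) satisfies Ẋ̂(t) = X(t) x̂₂(t) X(t)⁻¹ X̂(t) − a₁ X̂(t) log(X(t)⁻¹ X̂(t)) and ẋ̂₂(t) = u(t) − a₀ log(X(t)⁻¹ X̂(t)). Then the errors E_l(s) = X(s)⁻¹ X̂(s) and e₂(s) = x̂₂(s) − x₂(s) are differentiable at t and satisfy Ė_l(t) = e₂(t)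 E_l(t) − a₁ E_l(t) log(E_l(t)) and ė₂(t) = −a₀ log(E_l(t)). -/
open scoped Matrix.Norms.L2Operator

theorem inv_deriv' {n : ℕ} (X X' : ℝ → Matrix (Fin n) (Fin n) ℝ)
  (hXd : ∀ s : ℝ, HasDerivAt X (X' s) s)
  (hinv : ∀ s : ℝ, IsUnit (X s)) (t : ℝ) :
  HasDerivAt (fun s => (X s)⁻¹) (-((X t)⁻¹ * X' t * (X t)⁻¹)) t := by
  have h1 : ∀ s, (X s)⁻¹ = Ring.inverse (X s) := fun s =>
    Matrix.nonsing_inv_eq_ringInverse (X s)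
  have hcoe : ((hinv t).unit : Matrix (Fin n) (Fin n) ℝ) = X t := (hinv t).unit_spec
  have h2 := (hasFDerivAt_ringInverse (hinv t).unit).comp_hasDerivAt t (hXd t)
  simp only [h1]
  refine h2.congr_deriv ?_
  have h3 : (((hinv t).unit⁻¹ : (Matrix (Fin n) (Fin n) ℝ)ˣ) : Matrix (Fin n) (Fin n) ℝ)
      = (X t)⁻¹ := by rw [Matrix.coe_units_inv, hcoe]
  simp [ContinuousLinearMap.neg_apply, ContinuousLinearMap.mulLeftRight_apply, h3, ← h1]

/-- Direct partial-state observer (with output `Y = X`): if at time `t` the plant satisfies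
`Ẋ = X x₂`, `ẋ₂ = u` and the observer satisfies
`Ẋ̂ = X x̂₂ X⁻¹ X̂ − a₁ X̂ log(X⁻¹ X̂)`, `ẋ̂₂ = u − a₀ log(X⁻¹ X̂)`, then the errors
`E_l = X⁻¹ X̂` and `e₂ = x̂₂ − x₂` satisfy `Ė_l = e₂ E_l − a₁ E_l log E_l` and
`ė₂ = −a₀ log E_l` at `t`. -/
theorem direct_partial_state_observer_error {n : ℕ} (a₀ a₁ : ℝ)
    (u X x₂ Xhat xhat₂ X' x₂' Xhat' xhat₂' : ℝ → Matrix (Fin n) (Fin n) ℝ)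
    (hXd : ∀ s : ℝ, HasDerivAt X (X' s) s)
    (hx₂d : ∀ s : ℝ, HasDerivAt x₂ (x₂' s) s)
    (hXhd : ∀ s : ℝ, HasDerivAt Xhat (Xhat' s) s)
    (hxh₂d : ∀ s : ℝ, HasDerivAt xhat₂ (xhat₂' s) s)
    (hinv : ∀ s : ℝ, IsUnit (X s))
    (hball : ∀ s : ℝ, ‖(X s)⁻¹ * Xhat s - 1‖ < 1)
    (t : ℝ)
    (hplant1 : X' t = X t * x₂ t)
    (hplant2 : x₂' t = u t)
    (hobs1 : Xhat' t = X t * xhat₂ t * (X t)⁻¹ * Xhat t -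
      a₁ • (Xhat t * mlog ((X t)⁻¹ * Xhat t)))
    (hobs2 : xhat₂' t = u t - a₀ • mlog ((X t)⁻¹ * Xhat t)) :
    HasDerivAt (fun s => (X s)⁻¹ * Xhat s)
      ((xhat₂ t - x₂ t) * ((X t)⁻¹ * Xhat t) -
        a₁ • (((X t)⁻¹ * Xhat t) * mlog ((X t)⁻¹ * Xhat t))) t ∧
    HasDerivAt (fun s => xhat₂ s - x₂ s) (-(a₀ • mlog ((X t)⁻¹ * Xhat t))) t := by
  have hK : (X t)⁻¹ * X t = 1 :=
    Matrix.nonsing_inv_mul _ ((Matrix.isUnit_iff_isUnit_det _).mp (hinv t))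
  constructor
  · have hmul := (inv_deriv' X X' hXd hinv t).mul (hXhd t)
    refine hmul.congr_deriv ?_
    rw [hplant1, hobs1]
    simp only [mul_sub, mul_smul_comm, neg_mul, ← mul_assoc, hK, one_mul, sub_mul]
    abel
  · have h := (hxh₂d t).sub (hx₂d t)
    rw [hobs2, hplant2] at h
    refine h.congr_deriv ?_
    abel
end
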